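/- arXiv:1205.5085 — 4 statements merged into one kernel-verified Lean document; each statement's English description precedes it below -/
import Mathlib

section
/- The set of polynomials p (with complex coefficients) satisfying p(1) = p(-1) = 0 is dense in the weighted Hilbert space L²((-1,1); (1-x²)^{-1}dx). Equivalently, the Jacobi polynomials {P_n^{(-1,-1)}}_{n≥2} of degree ≥ 2 form a complete orthogonal set in L²((-1,1); (1-x²)^{-1}dx). -/
open MeasureTheory Set Filter

lemma tail_small (φ : ℝ → ℝ) (hφ : IntegrableOn φ (Ioo (-1:ℝ) 1)) (δ : ℝ) (hδ : 0 < δ) :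
    ∃ c : ℝ, 0 ≤ c ∧ c < 1 ∧ ∫ x in (Ioo (-1:ℝ) 1 \ Icc (-c) c), φ x < δ := by
  set s : ℕ → Set ℝ := fun n => Ioo (-1:ℝ) 1 ∩ Icc (-(1 - 1/(n+1))) (1 - 1/(n+1)) with hs
  have hmeas : ∀ n, MeasurableSet (s n) := fun n => measurableSet_Ioo.inter measurableSet_Icc
  have hmono : Monotone s := by
    intro m n hmn
    apply inter_subset_inter_right
    have h1 : 1/((n:ℝ)+1) ≤ 1/((m:ℝ)+1) := by
      apply one_div_le_one_div_of_le (by positivity)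
      exact_mod_cast by omega
    exact Icc_subset_Icc (by linarith) (by linarith)
  have hunion : ⋃ n, s n = Ioo (-1:ℝ) 1 := by
    apply Subset.antisymm
    · exact iUnion_subset fun n => inter_subset_left
    · intro x hx
      have hx' : |x| < 1 := by
        rw [abs_lt]; exact ⟨hx.1, hx.2⟩
      obtain ⟨n, hn⟩ := exists_nat_one_div_lt (show (0:ℝ) < 1 - |x| by linarith)
      refine mem_iUnion.2 ⟨n, hx, ?_⟩
      have habs : |x| ≤ 1 - 1/((n:ℝ)+1) := by linarith
      rw [abs_le] at habs
      exact ⟨habs.1, habs.2⟩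
  have htend := tendsto_setIntegral_of_monotone hmeas hmono (hunion ▸ hφ)
  rw [hunion] at htend
  obtain ⟨N, hN⟩ := (Metric.tendsto_atTop.1 htend) δ hδ
  have hNd := hN N le_rfl
  rw [Real.dist_eq, abs_lt] at hNd
  have h1N : (0:ℝ) < 1/((N:ℝ)+1) := by positivity
  have h1N' : 1/((N:ℝ)+1) ≤ 1 := by
    rw [div_le_one (by positivity)]; linarith [Nat.cast_nonneg (α := ℝ) N]
  refine ⟨1 - 1/(N+1), by linarith, by linarith, ?_⟩
  have hsub : s N ⊆ Ioo (-1:ℝ) 1 := inter_subset_left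
  have hdiff : Ioo (-1:ℝ) 1 \ Icc (-(1 - 1/((N:ℝ)+1))) (1 - 1/((N:ℝ)+1)) = Ioo (-1:ℝ) 1 \ s N := by
    rw [hs]; beta_reduce; rw [diff_self_inter]
  rw [hdiff, integral_diff (hmeas N) hφ hsub]
  linarith [hNd.1]

set_option maxHeartbeats 1000000 in
/-- The set of polynomials vanishing at `1` and `-1` is dense in the weighted Hilbert
space `L²((-1,1); (1-x²)⁻¹ dx)`; equivalently, the Jacobi polynomials
`{P_n^{(-1,-1)}}_{n ≥ 2}` form a complete orthogonal set there. -/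
theorem jacobi_m1_m1_polynomials_dense
    (f : ℝ → ℂ)
    (hf_meas : AEStronglyMeasurable f (volume.restrict (Ioo (-1 : ℝ) 1)))
    (hf_L2 : IntegrableOn (fun x => ‖f x‖ ^ 2 * (1 - x ^ 2)⁻¹) (Ioo (-1 : ℝ) 1))
    (ε : ℝ) (hε : 0 < ε) :
    ∃ p : Polynomial ℂ, p.eval 1 = 0 ∧ p.eval (-1) = 0 ∧
      ∫ x in Ioo (-1 : ℝ) 1, ‖f x - p.eval (x : ℂ)‖ ^ 2 * (1 - x ^ 2)⁻¹ < ε := by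
  -- Step 1: truncation
  obtain ⟨c, hc0, hc1, htail⟩ := tail_small _ hf_L2 (ε/16) (by positivity)
  set c' : ℝ := (c+1)/2 with hc'def
  have hcc' : c < c' := by rw [hc'def]; linarith
  have hc'1 : c' < 1 := by rw [hc'def]; linarith
  have hc'0 : 0 ≤ c' := by rw [hc'def]; linarith
  have hc'sq : 0 < 1 - c'^2 := by nlinarith
  set C' : ℝ := (1 - c'^2)⁻¹ with hC'def
  have hC'pos : 0 < C' := by rw [hC'def]; positivity
  set F : ℝ → ℂ := (Icc (-c) c).indicator f with hFdef
  have hIccIoo : Icc (-c) c ⊆ Ioo (-1:ℝ) 1 := fun x hx => ⟨by linarith [hx.1], by linarith [hx.2]⟩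
  have hFmeas : AEStronglyMeasurable F volume := by
    rw [hFdef, aestronglyMeasurable_indicator_iff measurableSet_Icc]
    exact hf_meas.mono_measure (Measure.restrict_mono hIccIoo le_rfl)
  -- ‖f‖^2 integrable on Icc (-c) c
  have hw1 : ∀ x ∈ Ioo (-1:ℝ) 1, (1:ℝ) ≤ (1 - x^2)⁻¹ := by
    intro x hx
    have h1 : 0 < 1 - x^2 := by nlinarith [hx.1, hx.2]
    have h2 : 1 - x^2 ≤ 1 := by nlinarith
    rw [le_inv_comm₀ one_pos h1]; simpa using h2
  have hfsqInt : IntegrableOn (fun x => ‖f x‖^2) (Icc (-c) c) := by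
    have hint : IntegrableOn (fun x => ‖f x‖ ^ 2 * (1 - x ^ 2)⁻¹) (Icc (-c) c) :=
      hf_L2.mono_set hIccIoo
    have hnm := (hf_meas.mono_measure (Measure.restrict_mono hIccIoo le_rfl)).norm
    have hasm : AEStronglyMeasurable (fun x => ‖f x‖^2) (volume.restrict (Icc (-c) c)) :=
      (hnm.mul hnm).congr (by filter_upwards with x; simp [pow_two])
    apply hint.mono' hasm
    filter_upwards [ae_restrict_mem measurableSet_Icc] with x hx
    have h1 := hw1 x (hIccIoo hx)
    have h2 : (0:ℝ) ≤ ‖f x‖^2 := by positivity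
    rw [Real.norm_eq_abs, abs_of_nonneg h2]
    nlinarith
  have hFsqInt : Integrable (fun x => ‖F x‖^2) volume := by
    have : (fun x => ‖F x‖^2) = (Icc (-c) c).indicator (fun x => ‖f x‖^2) := by
      funext x
      by_cases hx : x ∈ Icc (-c) c
      · simp [hFdef, indicator_of_mem hx]
      · simp [hFdef, indicator_of_notMem hx]
    rw [this, integrable_indicator_iff measurableSet_Icc]
    exact hfsqInt
  have hFmem : MemLp F 2 volume := (memLp_two_iff_integrable_sq_norm hFmeas).2 hFsqInt
  have hFmem' : MemLp F (ENNReal.ofReal 2) volume := by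
    convert hFmem using 2
    norm_num [ENNReal.ofReal_ofNat]
  obtain ⟨g₀, hg₀supp, hg₀int, hg₀cont, hg₀mem⟩ :=
    hFmem'.exists_hasCompactSupport_integral_rpow_sub_le two_pos
      (show (0:ℝ) < ε/(16*C') by positivity)
  -- Urysohn cut-off
  obtain ⟨χ, hχ0, hχ1, hχ01⟩ := exists_continuous_zero_one_of_isClosed
    (isOpen_Ioo (a := -c') (b := c')).isClosed_compl isClosed_Icc
    (Disjoint.mono_right (fun x hx => ⟨by linarith [hx.1], by linarith [hx.2]⟩ :
      Icc (-c) c ⊆ Ioo (-c') c') disjoint_compl_left)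
  set g : ℝ → ℂ := fun x => (χ x : ℂ) * g₀ x with hgdef
  have hgcont : Continuous g := (Complex.continuous_ofReal.comp χ.continuous).mul hg₀cont
  have hgzero : ∀ x, x ∉ Ioo (-c') c' → g x = 0 := by
    intro x hx
    have : χ x = 0 := hχ0 hx
    simp [hgdef, this]
  have hFg : ∀ x, ‖F x - g x‖ ≤ ‖F x - g₀ x‖ := by
    intro x
    by_cases hx : x ∈ Icc (-c) c
    · have h1 : χ x = 1 := hχ1 hx
      simp [hgdef, h1]
    · have hF0 : F x = 0 := indicator_of_notMem hx f
      rw [hF0]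
      simp only [zero_sub, norm_neg]
      rw [hgdef]
      simp only [norm_mul, Complex.norm_real]
      calc ‖χ x‖ * ‖g₀ x‖ ≤ 1 * ‖g₀ x‖ := by
            apply mul_le_mul_of_nonneg_right _ (norm_nonneg _)
            rw [Real.norm_eq_abs, abs_le]
            exact ⟨by linarith [(hχ01 x).1], (hχ01 x).2⟩
        _ = ‖g₀ x‖ := one_mul _
  -- the function h = g / (1-x^2), continuous on ℝ
  set h : ℝ → ℂ := fun x => (((1 - x^2)⁻¹ : ℝ) : ℂ) * g x with hhdef
  have hhcont : Continuous h := by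
    rw [continuous_iff_continuousAt]
    intro x
    by_cases hx : x ∈ Icc (-c') c'
    · have hne : 1 - x^2 ≠ 0 := by
        have h1 : |x| ≤ c' := abs_le.2 ⟨hx.1, hx.2⟩
        have : x^2 ≤ c'^2 := by nlinarith [abs_nonneg x, neg_abs_le x, le_abs_self x]
        nlinarith
      have hb : ContinuousAt (fun y : ℝ => 1 - y^2) x := by fun_prop
      have hinv : ContinuousAt (fun y : ℝ => (1 - y^2)⁻¹) x := hb.inv₀ hne
      exact (Complex.continuous_ofReal.continuousAt.comp hinv).mul hgcont.continuousAt
    · have hopen : IsOpen ((Icc (-c') c')ᶜ : Set ℝ) := isClosed_Icc.isOpen_compl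
      have hev : h =ᶠ[nhds x] (fun _ => (0:ℂ)) := by
        filter_upwards [hopen.mem_nhds hx] with y hy
        have : g y = 0 := hgzero y (fun hm => hy ⟨hm.1.le, hm.2.le⟩)
        simp [hhdef, this]
      exact ContinuousAt.congr continuousAt_const hev.symm
  -- Weierstrass approximation of real and imaginary parts
  set η : ℝ := Real.sqrt (ε/32) with hηdef
  have hηpos : 0 < η := Real.sqrt_pos.2 (by positivity)
  have hηsq : η^2 = ε/32 := Real.sq_sqrt (by positivity)
  obtain ⟨qre, hqre⟩ := exists_polynomial_near_of_continuousOn (-1) 1 (fun x => (h x).re)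
    ((Complex.continuous_re.comp hhcont).continuousOn) η hηpos
  obtain ⟨qim, hqim⟩ := exists_polynomial_near_of_continuousOn (-1) 1 (fun x => (h x).im)
    ((Complex.continuous_im.comp hhcont).continuousOn) η hηpos
  set Q : Polynomial ℂ := qre.map (algebraMap ℝ ℂ) +
    Polynomial.C Complex.I * qim.map (algebraMap ℝ ℂ) with hQdef
  have hQeval : ∀ x : ℝ, Q.eval (x:ℂ) = ((qre.eval x : ℝ) : ℂ) + Complex.I * ((qim.eval x : ℝ) : ℂ) := by
    intro x
    simp only [hQdef, Polynomial.eval_add, Polynomial.eval_mul, Polynomial.eval_C]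
    rw [show ((x:ℂ)) = algebraMap ℝ ℂ x from rfl, Polynomial.eval_map,
      Polynomial.eval₂_at_apply, Polynomial.eval_map, Polynomial.eval₂_at_apply]
    rfl
  -- the approximation bound for Q
  have hQnorm : ∀ x ∈ Icc (-1:ℝ) 1, ‖h x - Q.eval (x:ℂ)‖^2 ≤ ε/16 := by
    intro x hx
    have hre := hqre x hx
    have him := hqim x hx
    have hz : (h x - Q.eval (x:ℂ)).re = (h x).re - qre.eval x := by
      rw [hQeval]; simp
    have hz' : (h x - Q.eval (x:ℂ)).im = (h x).im - qim.eval x := by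
      rw [hQeval]; simp
    have hns : ‖h x - Q.eval (x:ℂ)‖^2 = (h x - Q.eval (x:ℂ)).re^2 + (h x - Q.eval (x:ℂ)).im^2 := by
      rw [Complex.sq_norm, Complex.normSq_apply]; ring
    rw [hns, hz, hz']
    have h1 : ((h x).re - qre.eval x)^2 ≤ η^2 := by
      nlinarith [abs_nonneg (qre.eval x - (h x).re), le_abs_self (qre.eval x - (h x).re),
        neg_abs_le (qre.eval x - (h x).re)]
    have h2 : ((h x).im - qim.eval x)^2 ≤ η^2 := by
      nlinarith [abs_nonneg (qim.eval x - (h x).im), le_abs_self (qim.eval x - (h x).im),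
        neg_abs_le (qim.eval x - (h x).im)]
    rw [hηsq] at h1 h2
    linarith
  -- the polynomial p
  set p : Polynomial ℂ := (1 - Polynomial.X^2) * Q with hpdef
  have hpeval : ∀ x : ℝ, p.eval (x:ℂ) = ((1 - x^2 : ℝ) : ℂ) * Q.eval (x:ℂ) := by
    intro x
    rw [hpdef, Polynomial.eval_mul]
    push_cast
    simp
  have hp1 : p.eval 1 = 0 := by
    rw [hpdef, Polynomial.eval_mul]; simp
  have hpm1 : p.eval (-1) = 0 := by
    rw [hpdef, Polynomial.eval_mul]; simp
  refine ⟨p, hp1, hpm1, ?_⟩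
  -- majorant
  set M1 : ℝ → ℝ := (Ioo (-1:ℝ) 1 \ Icc (-c) c).indicator (fun x => ‖f x‖^2 * (1 - x^2)⁻¹)
    with hM1def
  set M2 : ℝ → ℝ := fun x => ‖F x - g₀ x‖^2 with hM2def
  set M : ℝ → ℝ := fun x => 4 * M1 x + ((4*C') * M2 x + ε/8) with hMdef
  have hM1nonneg : ∀ x, 0 ≤ M1 x := by
    intro x
    rw [hM1def]
    apply indicator_nonneg
    intro y hy
    have := hw1 y hy.1
    positivity
  have key : ∀ x ∈ Ioo (-1:ℝ) 1, ‖f x - p.eval (x:ℂ)‖^2 * (1 - x^2)⁻¹ ≤ M x := by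
    intro x hx
    have hx2 : 0 < 1 - x^2 := by nlinarith [hx.1, hx.2]
    have hwpos : 0 < (1 - x^2)⁻¹ := by positivity
    set A := ‖f x - F x‖ with hA
    set B := ‖F x - g x‖ with hB
    set D := ‖g x - p.eval (x:ℂ)‖ with hD
    have htri : ‖f x - p.eval (x:ℂ)‖ ≤ A + B + D := by
      calc ‖f x - p.eval (x:ℂ)‖ ≤ ‖f x - g x‖ + ‖g x - p.eval (x:ℂ)‖ :=
              norm_sub_le_norm_sub_add_norm_sub _ _ _
        _ ≤ (A + B) + D := by
              gcongr
              exact norm_sub_le_norm_sub_add_norm_sub _ _ _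
    have hsq : ‖f x - p.eval (x:ℂ)‖^2 ≤ 4*A^2 + 4*B^2 + 2*D^2 := by
      nlinarith [sq_nonneg (A - B), sq_nonneg (A + B - D), norm_nonneg (f x - p.eval (x:ℂ)),
        norm_nonneg (f x - F x), norm_nonneg (F x - g x), norm_nonneg (g x - p.eval (x:ℂ))]
    have bound1 : A^2 * (1 - x^2)⁻¹ ≤ M1 x := by
      by_cases hxc : x ∈ Icc (-c) c
      · have : F x = f x := indicator_of_mem hxc f
        rw [hA, this]
        simp only [sub_self, norm_zero]
        simpa using hM1nonneg x
      · have hF0 : F x = 0 := indicator_of_notMem hxc f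
        rw [hM1def, indicator_of_mem (show x ∈ Ioo (-1:ℝ) 1 \ Icc (-c) c from ⟨hx, hxc⟩)]
        rw [hA, hF0, sub_zero]
    have bound2 : B^2 * (1 - x^2)⁻¹ ≤ C' * M2 x := by
      by_cases hxc : x ∈ Icc (-c') c'
      · have hxsq : x^2 ≤ c'^2 := by
          have h1 : |x| ≤ c' := abs_le.2 ⟨hxc.1, hxc.2⟩
          nlinarith [neg_abs_le x, le_abs_self x]
        have hwle : (1 - x^2)⁻¹ ≤ C' := by
          rw [hC'def]
          apply inv_anti₀ hc'sq
          linarith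
        have hBle : B ≤ ‖F x - g₀ x‖ := hFg x
        have : B^2 ≤ M2 x := by
          rw [hM2def]
          exact pow_le_pow_left₀ (norm_nonneg _) hBle 2
        nlinarith [norm_nonneg (F x - g x), norm_nonneg (F x - g₀ x), sq_nonneg B]
      · have hg0 : g x = 0 := hgzero x (fun hm => hxc ⟨hm.1.le, hm.2.le⟩)
        have hF0 : F x = 0 := indicator_of_notMem
          (fun hm => hxc ⟨by linarith [hm.1], by linarith [hm.2]⟩) f
        rw [hB, hg0, hF0]
        simp only [sub_zero, norm_zero, ne_eq]
        have : (0:ℝ) ≤ M2 x := by rw [hM2def]; positivity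
        nlinarith
    have bound3 : 2 * (D^2 * (1 - x^2)⁻¹) ≤ ε/8 := by
      have hgh : g x = ((1 - x^2 : ℝ) : ℂ) * h x := by
        rw [hhdef]
        rw [← mul_assoc, ← Complex.ofReal_mul, mul_inv_cancel₀ hx2.ne']
        simp
      have hD' : D = (1 - x^2) * ‖h x - Q.eval (x:ℂ)‖ := by
        rw [hD, hgh, hpeval x, ← mul_sub, norm_mul, Complex.norm_real,
          Real.norm_eq_abs, abs_of_pos hx2]
      have hQb := hQnorm x ⟨hx.1.le, hx.2.le⟩
      rw [hD']
      have hxle : 1 - x^2 ≤ 1 := by nlinarith [sq_nonneg x]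
      have expand : ((1 - x^2) * ‖h x - Q.eval (x:ℂ)‖)^2 * (1 - x^2)⁻¹
          = (1 - x^2) * ‖h x - Q.eval (x:ℂ)‖^2 := by
        field_simp
      rw [expand]
      nlinarith [norm_nonneg (h x - Q.eval (x:ℂ)), sq_nonneg ‖h x - Q.eval (x:ℂ)‖]
    have step : ‖f x - p.eval (x:ℂ)‖^2 * (1 - x^2)⁻¹ ≤ (4*A^2 + 4*B^2 + 2*D^2) * (1 - x^2)⁻¹ :=
      mul_le_mul_of_nonneg_right hsq hwpos.le
    rw [hMdef]
    have expand2 : (4*A^2 + 4*B^2 + 2*D^2) * (1 - x^2)⁻¹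
        = 4*(A^2 * (1 - x^2)⁻¹) + 4*(B^2 * (1 - x^2)⁻¹) + 2*(D^2 * (1 - x^2)⁻¹) := by ring
    rw [expand2] at step
    simp only []
    linarith
  -- integrability of the majorant
  have hsdiff : MeasurableSet (Ioo (-1:ℝ) 1 \ Icc (-c) c) :=
    measurableSet_Ioo.diff measurableSet_Icc
  have hM1int : Integrable M1 (volume.restrict (Ioo (-1:ℝ) 1)) := by
    rw [hM1def]
    exact hf_L2.indicator hsdiff
  have hg₀mem2 : MemLp g₀ 2 volume := by
    convert hg₀mem using 2
    norm_num [ENNReal.ofReal_ofNat]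
  have humem : MemLp (fun x => F x - g₀ x) 2 volume := hFmem.sub hg₀mem2
  have hM2int : Integrable M2 volume := by
    rw [hM2def]
    exact (memLp_two_iff_integrable_sq_norm humem.aestronglyMeasurable).1 humem
  have hconstint : Integrable (fun _ : ℝ => ε/8) (volume.restrict (Ioo (-1:ℝ) 1)) := by
    apply integrable_const_iff.2
    right
    exact isFiniteMeasure_restrict.2 measure_Ioo_lt_top.ne
  have h12int : Integrable (fun x => (4*C') * M2 x + ε/8) (volume.restrict (Ioo (-1:ℝ) 1)) :=
    ((hM2int.restrict).const_mul (4*C')).add hconstint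
  have hMint : Integrable M (volume.restrict (Ioo (-1:ℝ) 1)) := by
    rw [hMdef]
    exact (hM1int.const_mul 4).add h12int
  -- the main comparison
  have hmain : ∫ x in Ioo (-1:ℝ) 1, ‖f x - p.eval (x:ℂ)‖ ^ 2 * (1 - x ^ 2)⁻¹
      ≤ ∫ x in Ioo (-1:ℝ) 1, M x := by
    apply integral_mono_of_nonneg
    · rw [Filter.EventuallyLE, ae_restrict_iff' measurableSet_Ioo]
      filter_upwards with x hx
      have hx2 : 0 < 1 - x^2 := by nlinarith [hx.1, hx.2]
      have : (0:ℝ) ≤ ‖f x - p.eval (x:ℂ)‖ ^ 2 * (1 - x ^ 2)⁻¹ := by positivity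
      simpa using this
    · exact hMint
    · rw [Filter.EventuallyLE, ae_restrict_iff' measurableSet_Ioo]
      filter_upwards with x hx
      exact key x hx
  -- computing the integral of the majorant
  have hintM : ∫ x in Ioo (-1:ℝ) 1, M x
      = 4 * (∫ x in Ioo (-1:ℝ) 1, M1 x) + ((4*C') * (∫ x in Ioo (-1:ℝ) 1, M2 x)
        + (ε/8) * (volume (Ioo (-1:ℝ) 1)).toReal) := by
    rw [hMdef]
    rw [show (fun x => 4 * M1 x + ((4*C') * M2 x + ε/8))
        = (fun x => 4 * M1 x) + (fun x => (4*C') * M2 x + ε/8) from rfl,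
      integral_add' (hM1int.const_mul 4) h12int,
      show (fun x => (4*C') * M2 x + ε/8)
        = (fun x => (4*C') * M2 x) + (fun _ => ε/8) from rfl,
      integral_add' ((hM2int.restrict).const_mul (4*C')) hconstint,
      integral_const_mul, integral_const_mul, setIntegral_const]
    rw [smul_eq_mul, measureReal_def]; ring
  have hvol : (volume (Ioo (-1:ℝ) 1)).toReal = 2 := by
    rw [Real.volume_Ioo]
    rw [ENNReal.toReal_ofReal (by norm_num)]
    norm_num
  have hB1 : ∫ x in Ioo (-1:ℝ) 1, M1 x < ε/16 := by
    rw [hM1def, integral_indicator hsdiff, Measure.restrict_restrict hsdiff,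
      inter_eq_self_of_subset_left diff_subset]
    exact htail
  have hB2 : ∫ x in Ioo (-1:ℝ) 1, M2 x ≤ ε/(16*C') := by
    have h1 : ∫ x in Ioo (-1:ℝ) 1, M2 x ≤ ∫ x, M2 x := by
      apply setIntegral_le_integral hM2int
      filter_upwards with x
      rw [hM2def]
      positivity
    have h2 : ∫ x, M2 x ≤ ε/(16*C') := by
      rw [hM2def]
      have hconv : ∀ y : ℝ, y ^ (2:ℝ) = y ^ 2 := by
        intro y
        rw [show (2:ℝ) = ((2:ℕ):ℝ) by norm_num, Real.rpow_natCast]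
      calc ∫ x, ‖F x - g₀ x‖^2 = ∫ x, ‖F x - g₀ x‖ ^ (2:ℝ) := by
            simp_rw [hconv]
        _ ≤ ε/(16*C') := hg₀int
    linarith
  have hC'ne : C' ≠ 0 := hC'pos.ne'
  have harith : (4*C') * (ε/(16*C')) = ε/4 := by
    field_simp
    ring
  calc ∫ x in Ioo (-1:ℝ) 1, ‖f x - p.eval (x:ℂ)‖ ^ 2 * (1 - x ^ 2)⁻¹
      ≤ ∫ x in Ioo (-1:ℝ) 1, M x := hmain
    _ = 4 * (∫ x in Ioo (-1:ℝ) 1, M1 x) + ((4*C') * (∫ x in Ioo (-1:ℝ) 1, M2 x)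
        + (ε/8) * (volume (Ioo (-1:ℝ) 1)).toReal) := hintM
    _ < ε := by
        rw [hvol]
        have h2 : (4*C') * (∫ x in Ioo (-1:ℝ) 1, M2 x) ≤ (4*C') * (ε/(16*C')) := by
          apply mul_le_mul_of_nonneg_left hB2
          positivity
        rw [harith] at h2
        linarith
end

section
/- Let -∞ ≤ a < b ≤ ∞, let w be a positive Lebesgue measurable function on (a,b), and let φ, ψ be measurable functions with: (i) φ, ψ ∈ L²_loc((a,b); w); (ii) for some c ∈ (a,b), φ ∈ L²((a,c]; w) and ψ ∈ L²([c,b); w); (iii) for all a < α and β < b, ∫_a^α |φ|²w > 0 and ∫_β^b |ψ|²w > 0. Define (Ag)(x) := φ(x)∫_x^b ψ(t)g(t)w(t)dt and (Bg)(x) := ψ(x)∫_a^x φ(t)g(t)w(t)dt for g ∈ L²((a,b); w), and set K := sup_{x∈(a,b)} (∫_a^x |φ|²w)^{1/2}·(∫_x^b |ψ|²w)^{1/2}. Then A and B are bounded linear operators on L²((a,b); w) if and only if K < ∞, and in that case ‖Af‖ ≤ 2K‖f‖ and ‖Bg‖ ≤ 2K‖g‖ for all f, g ∈ L²((a,b);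 w). -/
open MeasureTheory Set ENNReal NNReal

private lemma lowerSet_lintegral_le (h : ℝ → ℝ≥0∞) (s : ℝ≥0∞) :
    ∫⁻ t in {t : ℝ | (∫⁻ u in Iio t, h u) < s}, h t ≤ s := by
  set F : ℝ → ℝ≥0∞ := fun t => ∫⁻ u in Iio t, h u with hF
  have hFmono : Monotone F := fun t₁ t₂ h12 => lintegral_mono_set (Iio_subset_Iio h12)
  set μ := volume.withDensity h with hμ
  have happ : ∀ T : Set ℝ, MeasurableSet T → μ T = ∫⁻ t in T, h t := fun T hT =>
    withDensity_apply h hT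
  have hE : MeasurableSet {t : ℝ | F t < s} :=
    measurableSet_lt hFmono.measurable measurable_const
  rw [← happ _ hE]
  set E := {t : ℝ | F t < s} with hEdef
  have hFq : ∀ t ∈ E, ∀ t' ≤ t, t' ∈ E := fun t ht t' h' => lt_of_le_of_lt (hFmono h') ht
  set E' := ⋃ q : {q : ℚ // (q : ℝ) ∈ E}, Iio (q : ℝ) with hE'def
  have hss : (E \ E').Subsingleton := by
    intro t ht u hu
    by_contra hne
    rcases Ne.lt_or_gt hne with hlt | hlt
    · obtain ⟨q, hq1, hq2⟩ := exists_rat_btwn hlt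
      exact ht.2 (mem_iUnion.mpr ⟨⟨q, hFq u hu.1 q hq2.le⟩, hq1⟩)
    · obtain ⟨q, hq1, hq2⟩ := exists_rat_btwn hlt
      exact hu.2 (mem_iUnion.mpr ⟨⟨q, hFq t ht.1 q hq2.le⟩, hq1⟩)
  have hnull : μ (E \ E') = 0 :=
    (withDensity_absolutelyContinuous volume h) (hss.measure_zero volume)
  have hsub : E ⊆ E' ∪ (E \ E') := fun t ht => by
    by_cases h' : t ∈ E'
    exacts [Or.inl h', Or.inr ⟨ht, h'⟩]
  calc μ E ≤ μ (E' ∪ (E \ E')) := measure_mono hsub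
    _ ≤ μ E' + μ (E \ E') := measure_union_le _ _
    _ = μ E' := by rw [hnull, add_zero]
    _ ≤ s := by
        have hdir : Directed (· ⊆ ·) (fun q : {q : ℚ // (q:ℝ) ∈ E} => Iio (q:ℝ)) := by
          intro q r
          rcases le_total (q:ℚ) r with hqr | hqr
          · exact ⟨r, Iio_subset_Iio (by exact_mod_cast hqr), subset_rfl⟩
          · exact ⟨q, subset_rfl, Iio_subset_Iio (by exact_mod_cast hqr)⟩
        rw [hE'def, hdir.measure_iUnion]
        refine iSup_le fun q => ?_
        rw [happ _ measurableSet_Iio]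
        exact le_of_lt q.2

private lemma keyIio (h : ℝ → ℝ≥0∞) (hh : Measurable h) (x : ℝ)
    (hfin : (∫⁻ t in Iio x, h t) ≠ ⊤)
    (hpos : ∀ t, t < x → h t ≠ 0 → 0 < ∫⁻ u in Iio t, h u) :
    ∫⁻ t in Iio x, h t * (∫⁻ u in Iio t, h u) ^ (-(1/2) : ℝ)
      ≤ 2 * (∫⁻ t in Iio x, h t) ^ ((1:ℝ)/2) := by
  set F : ℝ → ℝ≥0∞ := fun t => ∫⁻ u in Iio t, h u with hFdef
  have hFmono : Monotone F := fun t₁ t₂ h12 => lintegral_mono_set (Iio_subset_Iio h12)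
  have hFmeas : Measurable F := hFmono.measurable
  by_cases hzero : F x = 0
  · have hae : ∀ᵐ t ∂(volume.restrict (Iio x)), h t = 0 :=
      (lintegral_eq_zero_iff hh).mp hzero
    have : ∫⁻ t in Iio x, h t * F t ^ (-(1/2) : ℝ) = 0 := by
      rw [lintegral_congr_ae (g := fun _ => 0)]
      · exact lintegral_zero
      · filter_upwards [hae] with t ht; rw [ht, zero_mul]
    rw [this]; exact zero_le
  -- main case
  set r₀ : ℝ := (F x).toReal with hr₀def
  have hr₀ : 0 < r₀ := ENNReal.toReal_pos hzero hfin
  set ν := (volume.restrict (Iio x)).withDensity h with hνdef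
  have hν_apply : ∀ T : Set ℝ, MeasurableSet T → ν T = ∫⁻ t in T, h t ∂(volume.restrict (Iio x)) :=
    fun T hT => withDensity_apply h hT
  have hGmeas : Measurable fun t => (F t).toReal ^ (-(1/2) : ℝ) :=
    hFmeas.ennreal_toReal.pow measurable_const
  have hsetz : MeasurableSet {t : ℝ | h t = 0} := hh (measurableSet_singleton 0)
  have hne0 : ∀ᵐ t ∂ν, h t ≠ 0 := by
    rw [ae_iff]
    have heq : {t | ¬ h t ≠ 0} = {t : ℝ | h t = 0} := by ext t; simp
    rw [heq, hν_apply {t : ℝ | h t = 0} hsetz,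
      setLIntegral_congr_fun (g := fun _ => (0:ℝ≥0∞)) hsetz
        (fun t ht => ht), lintegral_zero]
  have hmem : ∀ᵐ t ∂ν, t < x := by
    refine (withDensity_absolutelyContinuous (volume.restrict (Iio x)) h).ae_le ?_
    filter_upwards [ae_restrict_mem measurableSet_Iio] with t ht using ht
  -- step 1 : rewrite as integral wrt ν
  have step1 : ∫⁻ t in Iio x, h t * F t ^ (-(1/2) : ℝ)
      = ∫⁻ t, ENNReal.ofReal ((F t).toReal ^ (-(1/2) : ℝ)) ∂ν := by
    rw [lintegral_withDensity_eq_lintegral_mul _ hh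
      (by exact hGmeas.ennreal_ofReal)]
    refine lintegral_congr_ae ?_
    filter_upwards [ae_restrict_mem measurableSet_Iio] with t ht
    by_cases h0 : h t = 0
    · simp [h0]
    · have hFt : 0 < F t := hpos t ht h0
      have hFtfin : F t ≠ ⊤ := ne_top_of_le_ne_top hfin (hFmono ht.le)
      have : F t ^ (-(1/2) : ℝ) = ENNReal.ofReal ((F t).toReal ^ (-(1/2) : ℝ)) := by
        conv_lhs => rw [← ENNReal.ofReal_toReal hFtfin]
        rw [ENNReal.ofReal_rpow_of_pos (ENNReal.toReal_pos hFt.ne' hFtfin)]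
      simp only [Pi.mul_apply]
      rw [this]
  -- step 2 : layer cake
  have step2 : ∫⁻ t, ENNReal.ofReal ((F t).toReal ^ (-(1/2) : ℝ)) ∂ν
      = ∫⁻ s in Ioi (0:ℝ), ν {t | s < (F t).toReal ^ (-(1/2) : ℝ)} :=
    lintegral_eq_lintegral_meas_lt ν
      (Filter.Eventually.of_forall fun t => Real.rpow_nonneg ENNReal.toReal_nonneg _)
      hGmeas.aemeasurable
  -- bounds on the measure
  have hb1 : ∀ s : ℝ, ν {t | s < (F t).toReal ^ (-(1/2) : ℝ)} ≤ F x := by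
    intro s
    calc ν _ ≤ ν univ := measure_mono (subset_univ _)
      _ = F x := by rw [hν_apply _ MeasurableSet.univ, Measure.restrict_univ]
  have hb2 : ∀ s : ℝ, 0 < s →
      ν {t | s < (F t).toReal ^ (-(1/2) : ℝ)} ≤ ENNReal.ofReal (s ^ (-2 : ℝ)) := by
    intro s hs
    have hT : MeasurableSet {t : ℝ | s < (F t).toReal ^ (-(1/2) : ℝ)} :=
      measurableSet_lt measurable_const hGmeas
    rw [hν_apply _ hT, Measure.restrict_restrict hT]
    have hE2 : MeasurableSet {t : ℝ | F t < ENNReal.ofReal (s ^ (-2:ℝ))} :=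
      measurableSet_lt hFmeas measurable_const
    have key : ∀ t : ℝ, t ∈ {t : ℝ | s < (F t).toReal ^ (-(1/2) : ℝ)} ∩ Iio x → h t ≠ 0 →
        F t < ENNReal.ofReal (s ^ (-2:ℝ)) := by
      rintro t ⟨ht1, ht2⟩ h0
      have hFt : 0 < F t := hpos t ht2 h0
      have hFtfin : F t ≠ ⊤ := ne_top_of_le_ne_top hfin (hFmono (le_of_lt ht2))
      have hr : 0 < (F t).toReal := ENNReal.toReal_pos hFt.ne' hFtfin
      have hs2 : s ^ (2:ℝ) < ((F t).toReal ^ (-(1/2):ℝ)) ^ (2:ℝ) :=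
        Real.rpow_lt_rpow hs.le ht1 (by norm_num)
      rw [← Real.rpow_mul hr.le, show (-(1/2) : ℝ) * 2 = -1 by norm_num,
        Real.rpow_neg_one] at hs2
      have ha : (0:ℝ) < s ^ (2:ℝ) := Real.rpow_pos_of_pos hs _
      have hmul : s ^ (2:ℝ) * (F t).toReal < 1 := by
        have h3 := mul_lt_mul_of_pos_right hs2 hr
        rwa [inv_mul_cancel₀ hr.ne'] at h3
      have hlt : (F t).toReal < (s ^ (2:ℝ))⁻¹ := by
        rw [← one_div, lt_div_iff₀ ha]
        linarith [hmul]
      have hfin2 : (F t).toReal < s ^ (-2:ℝ) := by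
        rwa [show (-2:ℝ) = -(2:ℝ) by norm_num, Real.rpow_neg hs.le]
      calc F t = ENNReal.ofReal (F t).toReal := (ENNReal.ofReal_toReal hFtfin).symm
        _ < ENNReal.ofReal (s ^ (-2:ℝ)) :=
          (ENNReal.ofReal_lt_ofReal_iff (lt_trans hr hfin2)).mpr hfin2
    calc ∫⁻ t in {t : ℝ | s < (F t).toReal ^ (-(1/2) : ℝ)} ∩ Iio x, h t
        ≤ ∫⁻ t in {t : ℝ | F t < ENNReal.ofReal (s ^ (-2:ℝ))}, h t := by
          rw [← lintegral_indicator (hT.inter measurableSet_Iio),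
            ← lintegral_indicator hE2]
          refine lintegral_mono fun t => ?_
          by_cases htm : t ∈ {t : ℝ | s < (F t).toReal ^ (-(1/2) : ℝ)} ∩ Iio x
          · rw [indicator_of_mem htm]
            by_cases hht : h t = 0
            · rw [hht]; exact zero_le
            · rw [indicator_of_mem
                (show t ∈ {t : ℝ | F t < ENNReal.ofReal (s ^ (-2:ℝ))} from key t htm hht)]
          · rw [indicator_of_notMem htm]; exact zero_le
      _ ≤ ENNReal.ofReal (s ^ (-2:ℝ)) := lowerSet_lintegral_le h _
  -- step 3 : split the outer integral
  set u : ℝ := r₀ ^ (-(1/2):ℝ) with hudef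
  have hu : 0 < u := Real.rpow_pos_of_pos hr₀ _
  have hsplit : ∫⁻ s in Ioi (0:ℝ), ν {t | s < (F t).toReal ^ (-(1/2) : ℝ)}
      ≤ ENNReal.ofReal (r₀ ^ ((1:ℝ)/2)) + ENNReal.ofReal (r₀ ^ ((1:ℝ)/2)) := by
    rw [← Ioc_union_Ioi_eq_Ioi hu.le]
    refine le_trans (lintegral_union_le _ _ _) ?_
    gcongr
    · -- Ioc part
      calc ∫⁻ s in Ioc (0:ℝ) u, ν {t | s < (F t).toReal ^ (-(1/2) : ℝ)}
          ≤ ∫⁻ _ in Ioc (0:ℝ) u, F x := lintegral_mono fun s => hb1 s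
        _ = F x * ENNReal.ofReal u := by
            rw [setLIntegral_const, Real.volume_Ioc, sub_zero]
        _ = ENNReal.ofReal (r₀ ^ ((1:ℝ)/2)) := by
            have hfinF : F x ≠ ⊤ := hfin
            rw [← ENNReal.ofReal_toReal hfinF, ← hr₀def,
              ← ENNReal.ofReal_mul hr₀.le]
            congr 1
            rw [hudef]
            nth_rewrite 1 [← Real.rpow_one r₀]
            rw [← Real.rpow_add hr₀]
            norm_num
    · -- Ioi part
      calc ∫⁻ s in Ioi u, ν {t | s < (F t).toReal ^ (-(1/2) : ℝ)}
          ≤ ∫⁻ s in Ioi u, ENNReal.ofReal (s ^ (-2:ℝ)) := by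
            refine lintegral_mono_ae ?_
            filter_upwards [ae_restrict_mem measurableSet_Ioi] with s hs
            exact hb2 s (lt_trans hu hs)
        _ = ENNReal.ofReal (∫ s in Ioi u, s ^ (-2:ℝ)) := by
            rw [ofReal_integral_eq_lintegral_ofReal
              (integrableOn_Ioi_rpow_of_lt (by norm_num) hu)]
            filter_upwards [ae_restrict_mem measurableSet_Ioi] with s hs
            exact Real.rpow_nonneg (le_of_lt (lt_trans hu hs)) _
        _ = ENNReal.ofReal (r₀ ^ ((1:ℝ)/2)) := by
            rw [integral_Ioi_rpow_of_lt (by norm_num) hu]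
            norm_num
            rw [hudef, ← Real.rpow_mul hr₀.le]
            norm_num
  calc ∫⁻ t in Iio x, h t * F t ^ (-(1/2) : ℝ)
      = ∫⁻ s in Ioi (0:ℝ), ν {t | s < (F t).toReal ^ (-(1/2) : ℝ)} := by
        rw [step1, step2]
    _ ≤ ENNReal.ofReal (r₀ ^ ((1:ℝ)/2)) + ENNReal.ofReal (r₀ ^ ((1:ℝ)/2)) := hsplit
    _ = 2 * (F x) ^ ((1:ℝ)/2) := by
        have hfinF : F x ≠ ⊤ := hfin
        rw [← two_mul, ← ENNReal.ofReal_rpow_of_pos hr₀, ENNReal.ofReal_toReal hfinF]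

private lemma lintegral_neg_set (f : ℝ → ℝ≥0∞) (E : Set ℝ) :
    ∫⁻ t in E, f (-t) = ∫⁻ t in Neg.neg '' E, f t :=
  (Measure.measurePreserving_neg volume).setLIntegral_comp_emb
    (MeasurableEquiv.neg ℝ).measurableEmbedding f E

private lemma keyIoi (h : ℝ → ℝ≥0∞) (hh : Measurable h) (x : ℝ)
    (hfin : (∫⁻ t in Ioi x, h t) ≠ ⊤)
    (hpos : ∀ t, x < t → h t ≠ 0 → 0 < ∫⁻ u in Ioi t, h u) :
    ∫⁻ t in Ioi x, h t * (∫⁻ u in Ioi t, h u) ^ (-(1/2) : ℝ)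
      ≤ 2 * (∫⁻ t in Ioi x, h t) ^ ((1:ℝ)/2) := by
  have himg : ∀ y : ℝ, Neg.neg '' (Iio y) = Ioi (-y) := fun y => by
    rw [Set.image_neg_eq_neg, Set.neg_Iio]
  have hIoi : ∀ y : ℝ, (∫⁻ u in Iio y, h (-u)) = ∫⁻ u in Ioi (-y), h u := fun y => by
    rw [lintegral_neg_set, himg]
  have hIoi' : ∀ y : ℝ, (∫⁻ u in Iio (-y), h (-u)) = ∫⁻ u in Ioi y, h u := fun y => by
    rw [hIoi, neg_neg]
  have key := keyIio (fun t => h (-t)) (hh.comp measurable_neg) (-x)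
    (by rw [hIoi' x]; exact hfin)
    (by
      intro t ht h0
      rw [hIoi t]
      exact hpos (-t) (by linarith) h0)
  rw [hIoi' x] at key
  refine le_trans (le_of_eq ?_) key
  rw [show (∫⁻ t in Iio (-x), h (-t) * (∫⁻ u in Iio t, h (-u)) ^ (-(1/2) : ℝ))
      = ∫⁻ t in Iio (-x), h (-t) * (∫⁻ u in Ioi (-t), h u) ^ (-(1/2) : ℝ) from
    lintegral_congr fun t => by rw [hIoi t]]
  rw [show (∫⁻ t in Iio (-x), h (-t) * (∫⁻ u in Ioi (-t), h u) ^ (-(1/2) : ℝ))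
      = ∫⁻ t in Neg.neg '' (Iio (-x)), h t * (∫⁻ u in Ioi t, h u) ^ (-(1/2) : ℝ) from
    lintegral_neg_set (fun t => h t * (∫⁻ u in Ioi t, h u) ^ (-(1/2) : ℝ)) (Iio (-x))]
  rw [himg, neg_neg]

private lemma swap_lintegral (S : Set ℝ) (u v : ℝ → ℝ≥0∞)
    (hu : Measurable u) (hv : Measurable v) :
    ∫⁻ x in S, u x * ∫⁻ t in S ∩ Iio x, v t = ∫⁻ t in S, v t * ∫⁻ x in S ∩ Ioi t, u x := by
  have hW : Measurable (fun z : ℝ × ℝ => if z.2 < z.1 then v z.2 * u z.1 else 0) := by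
    refine Measurable.ite ?_ ((hv.comp measurable_snd).mul (hu.comp measurable_fst))
      measurable_const
    exact measurableSet_lt measurable_snd measurable_fst
  have hswap := lintegral_lintegral_swap (μ := volume.restrict S) (ν := volume.restrict S)
    (f := fun x t => if t < x then v t * u x else 0) hW.aemeasurable
  calc ∫⁻ x in S, u x * ∫⁻ t in S ∩ Iio x, v t
      = ∫⁻ x in S, ∫⁻ t in S, (if t < x then v t * u x else 0) := by
        refine lintegral_congr fun x => ?_
        have : ∀ t : ℝ, (if t < x then v t * u x else 0)
            = (Iio x).indicator (fun t => v t * u x) t := fun t => by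
          simp [Set.indicator_apply, Set.mem_Iio]
        rw [lintegral_congr this, lintegral_indicator measurableSet_Iio,
          Measure.restrict_restrict measurableSet_Iio, Set.inter_comm,
          lintegral_mul_const _ hv, mul_comm]
    _ = ∫⁻ t in S, ∫⁻ x in S, (if t < x then v t * u x else 0) := hswap
    _ = ∫⁻ t in S, v t * ∫⁻ x in S ∩ Ioi t, u x := by
        refine lintegral_congr fun t => ?_
        have : ∀ x : ℝ, (if t < x then v t * u x else 0)
            = (Ioi t).indicator (fun x => v t * u x) x := fun x => by
          simp [Set.indicator_apply, Set.mem_Ioi]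
        rw [lintegral_congr this, lintegral_indicator measurableSet_Ioi,
          Measure.restrict_restrict measurableSet_Ioi, Set.inter_comm,
          lintegral_const_mul _ hu]

private lemma rpow_half_sq (y : ℝ≥0∞) : (y ^ ((1:ℝ)/2)) ^ (2:ℕ) = y := by
  rw [← ENNReal.rpow_natCast (y ^ ((1:ℝ)/2)) 2, ← ENNReal.rpow_mul]
  norm_num

private lemma sq_rpow_half (y : ℝ≥0∞) : (y ^ (2:ℕ)) ^ ((1:ℝ)/2) = y := by
  rw [← ENNReal.rpow_natCast y 2, ← ENNReal.rpow_mul]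
  norm_num

private lemma half_mul_half (y : ℝ≥0∞) : y ^ ((1:ℝ)/2) * y ^ ((1:ℝ)/2) = y := by
  have := rpow_half_sq y
  rwa [pow_two] at this

private lemma half_mul (x y : ℝ≥0∞) : (x ^ (2:ℕ) * y) ^ ((1:ℝ)/2) = x * y ^ ((1:ℝ)/2) := by
  rw [ENNReal.mul_rpow_of_nonneg _ _ (by norm_num : (0:ℝ) ≤ 1/2), sq_rpow_half]

private lemma rpow_half_mul_neg_half {y : ℝ≥0∞} (h0 : y ≠ 0) (hT : y ≠ ⊤) :
    y ^ ((1:ℝ)/2) * y ^ (-(1/2) : ℝ) = 1 := by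
  rw [ENNReal.rpow_neg, ENNReal.mul_inv_cancel]
  · simp [ENNReal.rpow_eq_zero_iff, h0, hT]
  · simp [ENNReal.rpow_eq_top_iff, h0, hT]

private lemma rpow_half_ne_zero {y : ℝ≥0∞} (h0 : y ≠ 0) (hT : y ≠ ⊤) :
    y ^ ((1:ℝ)/2) ≠ 0 := by
  simp [ENNReal.rpow_eq_zero_iff, h0, hT]

private lemma rpow_half_ne_top {y : ℝ≥0∞} (h0 : y ≠ 0) (hT : y ≠ ⊤) :
    y ^ ((1:ℝ)/2) ≠ ⊤ := by
  simp [ENNReal.rpow_eq_top_iff, h0, hT]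

private lemma nnnorm_complex_ofReal (r : ℝ) : ‖(r : ℂ)‖₊ = ‖r‖₊ :=
  NNReal.coe_injective (by simp [coe_nnnorm, Complex.norm_real])

private lemma coreB (S : Set ℝ) (hSm : MeasurableSet S) (f p q : ℝ → ℝ≥0∞)
    (hf : Measurable f) (hp : Measurable p) (hq : Measurable q)
    (hFfin : ∀ x ∈ S, (∫⁻ t in S ∩ Iio x, f t) ≠ ⊤)
    (hFpos : ∀ x ∈ S, 0 < ∫⁻ t in S ∩ Iio x, f t)
    (hGfin : ∀ x ∈ S, (∫⁻ t in S ∩ Ioi x, p t) ≠ ⊤)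
    (hGpos : ∀ x ∈ S, 0 < ∫⁻ t in S ∩ Ioi x, p t)
    (K : ℝ≥0∞)
    (hK : ∀ x ∈ S, (∫⁻ t in S ∩ Iio x, f t) ^ ((1:ℝ)/2)
        * (∫⁻ t in S ∩ Ioi x, p t) ^ ((1:ℝ)/2) ≤ K) :
    ∫⁻ x in S, p x * (∫⁻ t in S ∩ Iio x, f t ^ ((1:ℝ)/2) * q t ^ ((1:ℝ)/2)) ^ (2:ℕ)
      ≤ 4 * K ^ (2:ℕ) * ∫⁻ t in S, q t := by
  set F : ℝ → ℝ≥0∞ := fun x => ∫⁻ t in S ∩ Iio x, f t with hFdef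
  set G : ℝ → ℝ≥0∞ := fun x => ∫⁻ t in S ∩ Ioi x, p t with hGdef
  have hFmono : Monotone F := fun a b hab =>
    lintegral_mono_set (inter_subset_inter_right _ (Iio_subset_Iio hab))
  have hGanti : Antitone G := fun a b hab =>
    lintegral_mono_set (inter_subset_inter_right _ (Ioi_subset_Ioi hab))
  have hFmeas : Measurable F := hFmono.measurable
  have hGmeas : Measurable G := hGanti.measurable
  -- indicator conversions
  have hindF : ∀ x : ℝ, (∫⁻ t in Iio x, (S.indicator f) t) = F x := fun x => by
    rw [lintegral_indicator hSm, Measure.restrict_restrict hSm]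
  have hindG : ∀ x : ℝ, (∫⁻ t in Ioi x, (S.indicator p) t) = G x := fun x => by
    rw [lintegral_indicator hSm, Measure.restrict_restrict hSm]
  -- key estimate 1
  have hkey1 : ∀ x ∈ S, ∫⁻ t in S ∩ Iio x, f t * F t ^ (-(1/2) : ℝ)
      ≤ 2 * F x ^ ((1:ℝ)/2) := by
    intro x hx
    have h1 := keyIio (S.indicator f) (hf.indicator hSm) x
      (by rw [hindF x]; exact hFfin x hx)
      (by
        intro t ht h0
        have htS : t ∈ S := by
          by_contra htS
          exact h0 (Set.indicator_of_notMem htS f)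
        rw [hindF t]
        exact hFpos t htS)
    rw [hindF x] at h1
    have heq : ∀ t : ℝ, S.indicator f t * (∫⁻ u in Iio t, (S.indicator f) u) ^ (-(1/2) : ℝ)
        = S.indicator (fun t => f t * F t ^ (-(1/2) : ℝ)) t := by
      intro t
      rw [hindF t]
      by_cases htS : t ∈ S
      · rw [Set.indicator_of_mem htS, Set.indicator_of_mem htS]
      · rw [Set.indicator_of_notMem htS, Set.indicator_of_notMem htS, zero_mul]
    calc ∫⁻ t in S ∩ Iio x, f t * F t ^ (-(1/2) : ℝ)
        = ∫⁻ t in Iio x, S.indicator f t * (∫⁻ u in Iio t, (S.indicator f) u) ^ (-(1/2) : ℝ) := by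
          rw [lintegral_congr heq, lintegral_indicator hSm, Measure.restrict_restrict hSm]
      _ ≤ 2 * F x ^ ((1:ℝ)/2) := h1
  -- key estimate 2
  have hkey2 : ∀ t ∈ S, ∫⁻ x in S ∩ Ioi t, p x * G x ^ (-(1/2) : ℝ)
      ≤ 2 * G t ^ ((1:ℝ)/2) := by
    intro t ht
    have h1 := keyIoi (S.indicator p) (hp.indicator hSm) t
      (by rw [hindG t]; exact hGfin t ht)
      (by
        intro x hx h0
        have hxS : x ∈ S := by
          by_contra hxS
          exact h0 (Set.indicator_of_notMem hxS p)
        rw [hindG x]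
        exact hGpos x hxS)
    rw [hindG t] at h1
    have heq : ∀ x : ℝ, S.indicator p x * (∫⁻ u in Ioi x, (S.indicator p) u) ^ (-(1/2) : ℝ)
        = S.indicator (fun x => p x * G x ^ (-(1/2) : ℝ)) x := by
      intro x
      rw [hindG x]
      by_cases hxS : x ∈ S
      · rw [Set.indicator_of_mem hxS, Set.indicator_of_mem hxS]
      · rw [Set.indicator_of_notMem hxS, Set.indicator_of_notMem hxS, zero_mul]
    calc ∫⁻ x in S ∩ Ioi t, p x * G x ^ (-(1/2) : ℝ)
        = ∫⁻ x in Ioi t, S.indicator p x * (∫⁻ u in Ioi x, (S.indicator p) u) ^ (-(1/2) : ℝ) := by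
          rw [lintegral_congr heq, lintegral_indicator hSm, Measure.restrict_restrict hSm]
      _ ≤ 2 * G t ^ ((1:ℝ)/2) := h1
  -- pointwise K bounds
  have hFG1 : ∀ x ∈ S, F x ^ ((1:ℝ)/2) ≤ K * G x ^ (-(1/2) : ℝ) := by
    intro x hx
    have h1 : F x ^ ((1:ℝ)/2) = (F x ^ ((1:ℝ)/2) * G x ^ ((1:ℝ)/2)) * G x ^ (-(1/2) : ℝ) := by
      rw [mul_assoc, rpow_half_mul_neg_half (hGpos x hx).ne' (hGfin x hx), mul_one]
    rw [h1]
    exact mul_le_mul_left (hK x hx) _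
  have hFG2 : ∀ x ∈ S, G x ^ ((1:ℝ)/2) ≤ K * F x ^ (-(1/2) : ℝ) := by
    intro x hx
    have h1 : G x ^ ((1:ℝ)/2) = (F x ^ ((1:ℝ)/2) * G x ^ ((1:ℝ)/2)) * F x ^ (-(1/2) : ℝ) := by
      rw [mul_comm (F x ^ ((1:ℝ)/2)), mul_assoc,
        rpow_half_mul_neg_half (hFpos x hx).ne' (hFfin x hx), mul_one]
    rw [h1]
    exact mul_le_mul_left (hK x hx) _
  -- Cauchy-Schwarz
  have hCS : ∀ x ∈ S, (∫⁻ t in S ∩ Iio x, f t ^ ((1:ℝ)/2) * q t ^ ((1:ℝ)/2)) ^ (2:ℕ)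
      ≤ (∫⁻ t in S ∩ Iio x, f t * F t ^ (-(1/2) : ℝ))
        * (∫⁻ t in S ∩ Iio x, q t * F t ^ ((1:ℝ)/2)) := by
    intro x hx
    set u : ℝ → ℝ≥0∞ := fun t => (f t * F t ^ (-(1/2) : ℝ)) ^ ((1:ℝ)/2) with hudef
    set v : ℝ → ℝ≥0∞ := fun t => (q t * F t ^ ((1:ℝ)/2)) ^ ((1:ℝ)/2) with hvdef
    have hum : Measurable u := (hf.mul (hFmeas.pow measurable_const)).pow measurable_const
    have hvm : Measurable v := (hq.mul (hFmeas.pow measurable_const)).pow measurable_const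
    have huv : ∫⁻ t in S ∩ Iio x, f t ^ ((1:ℝ)/2) * q t ^ ((1:ℝ)/2)
        = ∫⁻ t in S ∩ Iio x, u t * v t := by
      refine lintegral_congr_ae ?_
      filter_upwards [ae_restrict_mem (hSm.inter measurableSet_Iio)] with t ht
      have h0 : F t ≠ 0 := (hFpos t ht.1).ne'
      have hT : F t ≠ ⊤ := hFfin t ht.1
      have hmid : f t * F t ^ (-(1/2) : ℝ) * (q t * F t ^ ((1:ℝ)/2)) = f t * q t := by
        calc f t * F t ^ (-(1/2) : ℝ) * (q t * F t ^ ((1:ℝ)/2))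
            = f t * q t * (F t ^ ((1:ℝ)/2) * F t ^ (-(1/2) : ℝ)) := by ring
          _ = f t * q t := by rw [rpow_half_mul_neg_half h0 hT, mul_one]
      calc f t ^ ((1:ℝ)/2) * q t ^ ((1:ℝ)/2)
          = (f t * q t) ^ ((1:ℝ)/2) :=
            (ENNReal.mul_rpow_of_nonneg _ _ (by norm_num : (0:ℝ) ≤ 1/2)).symm
        _ = (f t * F t ^ (-(1/2) : ℝ) * (q t * F t ^ ((1:ℝ)/2))) ^ ((1:ℝ)/2) := by
            rw [hmid]
        _ = u t * v t := ENNReal.mul_rpow_of_nonneg _ _ (by norm_num : (0:ℝ) ≤ 1/2)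
    have hconj : Real.HolderConjugate 2 2 := Real.HolderConjugate.two_two
    have hH := ENNReal.lintegral_mul_le_Lp_mul_Lq (volume.restrict (S ∩ Iio x)) hconj
      hum.aemeasurable hvm.aemeasurable
    have hu2 : ∀ t : ℝ, u t ^ (2:ℝ) = f t * F t ^ (-(1/2) : ℝ) := fun t => by
      rw [hudef]; simp only
      rw [← ENNReal.rpow_mul]; norm_num
    have hv2 : ∀ t : ℝ, v t ^ (2:ℝ) = q t * F t ^ ((1:ℝ)/2) := fun t => by
      rw [hvdef]; simp only
      rw [← ENNReal.rpow_mul]; norm_num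
    rw [huv]
    calc (∫⁻ t in S ∩ Iio x, u t * v t) ^ (2:ℕ)
        ≤ ((∫⁻ t in S ∩ Iio x, u t ^ (2:ℝ)) ^ ((1:ℝ)/2)
          * (∫⁻ t in S ∩ Iio x, v t ^ (2:ℝ)) ^ ((1:ℝ)/2)) ^ (2:ℕ) := by
          refine pow_le_pow_left₀ zero_le ?_ 2
          simpa [one_div] using hH
      _ = (∫⁻ t in S ∩ Iio x, u t ^ (2:ℝ)) * (∫⁻ t in S ∩ Iio x, v t ^ (2:ℝ)) := by
          rw [mul_pow, rpow_half_sq, rpow_half_sq]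
      _ = (∫⁻ t in S ∩ Iio x, f t * F t ^ (-(1/2) : ℝ))
          * (∫⁻ t in S ∩ Iio x, q t * F t ^ ((1:ℝ)/2)) := by
          rw [lintegral_congr hu2, lintegral_congr hv2]
  -- inner bound after swap
  have hinner : ∀ t ∈ S, (∫⁻ x in S ∩ Ioi t, p x * F x ^ ((1:ℝ)/2))
      ≤ 2 * K ^ (2:ℕ) * F t ^ (-(1/2) : ℝ) := by
    intro t ht
    calc ∫⁻ x in S ∩ Ioi t, p x * F x ^ ((1:ℝ)/2)
        ≤ ∫⁻ x in S ∩ Ioi t, K * (p x * G x ^ (-(1/2) : ℝ)) := by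
          refine lintegral_mono_ae ?_
          filter_upwards [ae_restrict_mem (hSm.inter measurableSet_Ioi)] with x hxm
          calc p x * F x ^ ((1:ℝ)/2) ≤ p x * (K * G x ^ (-(1/2) : ℝ)) :=
                mul_le_mul_right (hFG1 x hxm.1) _
            _ = K * (p x * G x ^ (-(1/2) : ℝ)) := by ring
      _ = K * ∫⁻ x in S ∩ Ioi t, p x * G x ^ (-(1/2) : ℝ) :=
          lintegral_const_mul K (hp.mul (hGmeas.pow measurable_const))
      _ ≤ K * (2 * G t ^ ((1:ℝ)/2)) := mul_le_mul_right (hkey2 t ht) _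
      _ ≤ K * (2 * (K * F t ^ (-(1/2) : ℝ))) :=
          mul_le_mul_right (mul_le_mul_right (hFG2 t ht) _) _
      _ = 2 * K ^ (2:ℕ) * F t ^ (-(1/2) : ℝ) := by ring
  -- main chain
  have hVmeas : Measurable fun x => ∫⁻ t in S ∩ Iio x, q t * F t ^ ((1:ℝ)/2) := by
    have : Monotone fun x => ∫⁻ t in S ∩ Iio x, q t * F t ^ ((1:ℝ)/2) := fun a b hab =>
      lintegral_mono_set (inter_subset_inter_right _ (Iio_subset_Iio hab))
    exact this.measurable
  calc ∫⁻ x in S, p x * (∫⁻ t in S ∩ Iio x, f t ^ ((1:ℝ)/2) * q t ^ ((1:ℝ)/2)) ^ (2:ℕ)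
      ≤ ∫⁻ x in S, 2 * ((p x * F x ^ ((1:ℝ)/2))
          * ∫⁻ t in S ∩ Iio x, q t * F t ^ ((1:ℝ)/2)) := by
        refine lintegral_mono_ae ?_
        filter_upwards [ae_restrict_mem hSm] with x hx
        calc p x * (∫⁻ t in S ∩ Iio x, f t ^ ((1:ℝ)/2) * q t ^ ((1:ℝ)/2)) ^ (2:ℕ)
            ≤ p x * ((∫⁻ t in S ∩ Iio x, f t * F t ^ (-(1/2) : ℝ))
              * (∫⁻ t in S ∩ Iio x, q t * F t ^ ((1:ℝ)/2))) :=
              mul_le_mul_right (hCS x hx) _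
          _ ≤ p x * ((2 * F x ^ ((1:ℝ)/2))
              * (∫⁻ t in S ∩ Iio x, q t * F t ^ ((1:ℝ)/2))) :=
              mul_le_mul_right (mul_le_mul_left (hkey1 x hx) _) _
          _ = 2 * ((p x * F x ^ ((1:ℝ)/2)) * ∫⁻ t in S ∩ Iio x, q t * F t ^ ((1:ℝ)/2)) := by
              ring
    _ = 2 * ∫⁻ x in S, (p x * F x ^ ((1:ℝ)/2)) * ∫⁻ t in S ∩ Iio x, q t * F t ^ ((1:ℝ)/2) :=
        lintegral_const_mul 2 ((hp.mul (hFmeas.pow measurable_const)).mul hVmeas)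
    _ = 2 * ∫⁻ t in S, (q t * F t ^ ((1:ℝ)/2)) * ∫⁻ x in S ∩ Ioi t, p x * F x ^ ((1:ℝ)/2) := by
        rw [swap_lintegral S (fun x => p x * F x ^ ((1:ℝ)/2)) (fun t => q t * F t ^ ((1:ℝ)/2))
          (hp.mul (hFmeas.pow measurable_const))
          (hq.mul (hFmeas.pow measurable_const))]
    _ ≤ 2 * ∫⁻ t in S, (q t * F t ^ ((1:ℝ)/2)) * (2 * K ^ (2:ℕ) * F t ^ (-(1/2) : ℝ)) := by
        refine mul_le_mul_right (lintegral_mono_ae ?_) 2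
        filter_upwards [ae_restrict_mem hSm] with t ht
        exact mul_le_mul_right (hinner t ht) _
    _ = 2 * ∫⁻ t in S, 2 * K ^ (2:ℕ) * q t := by
        congr 1
        refine lintegral_congr_ae ?_
        filter_upwards [ae_restrict_mem hSm] with t ht
        calc q t * F t ^ ((1:ℝ)/2) * (2 * K ^ (2:ℕ) * F t ^ (-(1/2) : ℝ))
            = 2 * K ^ (2:ℕ) * q t * (F t ^ ((1:ℝ)/2) * F t ^ (-(1/2) : ℝ)) := by ring
          _ = 2 * K ^ (2:ℕ) * q t := by
              rw [rpow_half_mul_neg_half (hFpos t ht).ne' (hFfin t ht), mul_one]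
    _ = 4 * K ^ (2:ℕ) * ∫⁻ t in S, q t := by
        rw [lintegral_const_mul (2 * K ^ (2:ℕ)) hq]
        ring

private lemma coreA (S : Set ℝ) (hSm : MeasurableSet S) (f p q : ℝ → ℝ≥0∞)
    (hf : Measurable f) (hp : Measurable p) (hq : Measurable q)
    (hFfin : ∀ x ∈ S, (∫⁻ t in S ∩ Iio x, f t) ≠ ⊤)
    (hFpos : ∀ x ∈ S, 0 < ∫⁻ t in S ∩ Iio x, f t)
    (hGfin : ∀ x ∈ S, (∫⁻ t in S ∩ Ioi x, p t) ≠ ⊤)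
    (hGpos : ∀ x ∈ S, 0 < ∫⁻ t in S ∩ Ioi x, p t)
    (K : ℝ≥0∞)
    (hK : ∀ x ∈ S, (∫⁻ t in S ∩ Iio x, f t) ^ ((1:ℝ)/2)
        * (∫⁻ t in S ∩ Ioi x, p t) ^ ((1:ℝ)/2) ≤ K) :
    ∫⁻ x in S, f x * (∫⁻ t in S ∩ Ioi x, p t ^ ((1:ℝ)/2) * q t ^ ((1:ℝ)/2)) ^ (2:ℕ)
      ≤ 4 * K ^ (2:ℕ) * ∫⁻ t in S, q t := by
  have hS' : MeasurableSet (Neg.neg ⁻¹' S) := measurable_neg hSm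
  have himg : ∀ E : Set ℝ, Neg.neg '' (Neg.neg ⁻¹' E) = E := fun E =>
    Set.image_preimage_eq E neg_surjective
  have himg2 : ∀ x : ℝ, Neg.neg '' (Neg.neg ⁻¹' S ∩ Iio x) = S ∩ Ioi (-x) := fun x => by
    rw [Set.image_inter neg_injective, himg, Set.image_neg_eq_neg, Set.neg_Iio]
  have himg3 : ∀ x : ℝ, Neg.neg '' (Neg.neg ⁻¹' S ∩ Ioi x) = S ∩ Iio (-x) := fun x => by
    rw [Set.image_inter neg_injective, himg, Set.image_neg_eq_neg, Set.neg_Ioi]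
  have hmem : ∀ x : ℝ, x ∈ Neg.neg ⁻¹' S → -x ∈ S := fun x hx => hx
  have hcore := coreB (Neg.neg ⁻¹' S) hS' (fun t => p (-t)) (fun t => f (-t)) (fun t => q (-t))
    (hp.comp measurable_neg) (hf.comp measurable_neg) (hq.comp measurable_neg)
    (fun x hx => by
      rw [lintegral_neg_set (fun t => p t) _, himg2]
      exact hGfin (-x) (hmem x hx))
    (fun x hx => by
      rw [lintegral_neg_set (fun t => p t) _, himg2]
      exact hGpos (-x) (hmem x hx))
    (fun x hx => by
      rw [lintegral_neg_set (fun t => f t) _, himg3]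
      exact hFfin (-x) (hmem x hx))
    (fun x hx => by
      rw [lintegral_neg_set (fun t => f t) _, himg3]
      exact hFpos (-x) (hmem x hx))
    K
    (fun x hx => by
      rw [lintegral_neg_set (fun t => p t) _, himg2,
        lintegral_neg_set (fun t => f t) _, himg3, mul_comm]
      exact hK (-x) (hmem x hx))
  have hq' : (∫⁻ t in Neg.neg ⁻¹' S, q (-t)) = ∫⁻ t in S, q t := by
    rw [lintegral_neg_set (fun t => q t) _, himg]
  rw [hq'] at hcore
  have hLHS : ∫⁻ x in S, f x * (∫⁻ t in S ∩ Ioi x, p t ^ ((1:ℝ)/2) * q t ^ ((1:ℝ)/2)) ^ (2:ℕ)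
      = ∫⁻ x in Neg.neg ⁻¹' S, f (-x)
          * (∫⁻ t in Neg.neg ⁻¹' S ∩ Iio x, p (-t) ^ ((1:ℝ)/2) * q (-t) ^ ((1:ℝ)/2)) ^ (2:ℕ) := by
    have e1 := lintegral_neg_set
      (fun y => f y * (∫⁻ t in S ∩ Ioi y, p t ^ ((1:ℝ)/2) * q t ^ ((1:ℝ)/2)) ^ (2:ℕ))
      (Neg.neg ⁻¹' S)
    rw [himg] at e1
    rw [← e1]
    refine lintegral_congr fun x => ?_
    congr 2
    rw [lintegral_neg_set (fun t => p t ^ ((1:ℝ)/2) * q t ^ ((1:ℝ)/2)) _, himg2]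
  rw [hLHS]
  exact hcore

/-- The weighted `L²` norm `(∫_S |u|² w)^{1/2}` (valued in `ℝ≥0∞`). -/
noncomputable def wL2norm (S : Set ℝ) (w : ℝ → ℝ) (u : ℝ → ℂ) : ℝ≥0∞ :=
  (∫⁻ t in S, (‖u t‖₊ : ℝ≥0∞) ^ 2 * ENNReal.ofReal (w t)) ^ (1 / 2 : ℝ)

/-- The Chisholm–Everitt(–Littlejohn / Talenti / Tomaselli / Muckenhoupt) inequality:
with `S = (a,b)` (where `-∞ ≤ a < b ≤ ∞`), `w > 0` on `S`, and `φ, ψ` satisfying the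
local and endpoint square-integrability conditions, the operators
`(Ag)(x) = φ(x) ∫_x^b ψ g w` and `(Bg)(x) = ψ(x) ∫_a^x φ g w` are bounded on
`L²(S; w)` if and only if `K := sup_x (∫_a^x φ²w)^{1/2} (∫_x^b ψ²w)^{1/2}` is finite,
in which case `‖Af‖ ≤ 2K‖f‖` and `‖Bg‖ ≤ 2K‖g‖`. -/
theorem chisholm_everitt_inequality
    (a b : EReal) (hab : a < b)
    (S : Set ℝ) (hS : S = {t : ℝ | a < (t : EReal) ∧ (t : EReal) < b})
    (w φ ψ : ℝ → ℝ)
    (hw_meas : Measurable w) (hw_pos : ∀ t ∈ S, 0 < w t)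
    (hφ_meas : Measurable φ) (hψ_meas : Measurable ψ)
    (hφ_loc : ∀ p ∈ S, ∀ q ∈ S, IntegrableOn (fun t => φ t ^ 2 * w t) (Icc p q))
    (hψ_loc : ∀ p ∈ S, ∀ q ∈ S, IntegrableOn (fun t => ψ t ^ 2 * w t) (Icc p q))
    (c : ℝ) (hc : c ∈ S)
    (hφ_left : IntegrableOn (fun t => φ t ^ 2 * w t) (S ∩ Iic c))
    (hψ_right : IntegrableOn (fun t => ψ t ^ 2 * w t) (S ∩ Ici c))
    (hφ_pos : ∀ α ∈ S, 0 < ∫ t in S ∩ Iio α, φ t ^ 2 * w t)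
    (hψ_pos : ∀ β ∈ S, 0 < ∫ t in S ∩ Ioi β, ψ t ^ 2 * w t)
    (A B : (ℝ → ℂ) → (ℝ → ℂ))
    (hA : ∀ g x, A g x = (φ x : ℂ) * ∫ t in S ∩ Ioi x, (ψ t : ℂ) * g t * (w t : ℂ))
    (hB : ∀ g x, B g x = (ψ x : ℂ) * ∫ t in S ∩ Iio x, (φ t : ℂ) * g t * (w t : ℂ))
    (K : ℝ≥0∞)
    (hK : K = ⨆ x ∈ S,
      (∫⁻ t in S ∩ Iio x, ENNReal.ofReal (φ t ^ 2 * w t)) ^ (1 / 2 : ℝ) *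
        (∫⁻ t in S ∩ Ioi x, ENNReal.ofReal (ψ t ^ 2 * w t)) ^ (1 / 2 : ℝ)) :
    ((∃ C : ℝ≥0, ∀ g : ℝ → ℂ, AEStronglyMeasurable g (volume.restrict S) →
        wL2norm S w g < ⊤ →
          wL2norm S w (A g) ≤ C * wL2norm S w g ∧
          wL2norm S w (B g) ≤ C * wL2norm S w g) ↔ K ≠ ⊤) ∧
    (∀ g : ℝ → ℂ, AEStronglyMeasurable g (volume.restrict S) →
        wL2norm S w g < ⊤ →
          wL2norm S w (A g) ≤ 2 * K * wL2norm S w g ∧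
          wL2norm S w (B g) ≤ 2 * K * wL2norm S w g) := by
  have hSm : MeasurableSet S := by
    rw [hS]
    have h1 : Measurable (fun t : ℝ => (t : EReal)) := continuous_coe_real_ereal.measurable
    exact MeasurableSet.inter (h1 measurableSet_Ioi) (h1 measurableSet_Iio)
  set fφ : ℝ → ℝ≥0∞ := fun t => (‖φ t‖₊ : ℝ≥0∞) ^ (2:ℕ) * ENNReal.ofReal (w t) with hfφdef
  set fψ : ℝ → ℝ≥0∞ := fun t => (‖ψ t‖₊ : ℝ≥0∞) ^ (2:ℕ) * ENNReal.ofReal (w t) with hfψdef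
  have hfφm : Measurable fφ :=
    ((hφ_meas.nnnorm).coe_nnreal_ennreal.pow_const 2).mul hw_meas.ennreal_ofReal
  have hfψm : Measurable fψ :=
    ((hψ_meas.nnnorm).coe_nnreal_ennreal.pow_const 2).mul hw_meas.ennreal_ofReal
  have hofφ : ∀ t, ENNReal.ofReal (φ t ^ 2 * w t) = fφ t := fun t => by
    rw [hfφdef]
    simp only
    rw [ENNReal.ofReal_mul (sq_nonneg _)]
    congr 1
    rw [← sq_abs (φ t), ENNReal.ofReal_pow (abs_nonneg _), ← Real.enorm_eq_ofReal_abs, enorm_eq_nnnorm]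
  have hofψ : ∀ t, ENNReal.ofReal (ψ t ^ 2 * w t) = fψ t := fun t => by
    rw [hfψdef]
    simp only
    rw [ENNReal.ofReal_mul (sq_nonneg _)]
    congr 1
    rw [← sq_abs (ψ t), ENNReal.ofReal_pow (abs_nonneg _), ← Real.enorm_eq_ofReal_abs, enorm_eq_nnnorm]
  set F : ℝ → ℝ≥0∞ := fun x => ∫⁻ t in S ∩ Iio x, ENNReal.ofReal (φ t ^ 2 * w t) with hFdef
  set G : ℝ → ℝ≥0∞ := fun x => ∫⁻ t in S ∩ Ioi x, ENNReal.ofReal (ψ t ^ 2 * w t) with hGdef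
  have hFφ : ∀ x, F x = ∫⁻ t in S ∩ Iio x, fφ t := fun x =>
    lintegral_congr fun t => hofφ t
  have hGψ : ∀ x, G x = ∫⁻ t in S ∩ Ioi x, fψ t := fun x =>
    lintegral_congr fun t => hofψ t
  -- integrability of the endpoint integrals
  have hφint : ∀ x ∈ S, IntegrableOn (fun t => φ t ^ 2 * w t) (S ∩ Iio x) := by
    intro x hx
    rcases le_total x c with hxc | hcx
    · exact hφ_left.mono_set fun t ht => ⟨ht.1, le_trans (le_of_lt ht.2) hxc⟩
    · refine (hφ_left.union (hφ_loc c hc x hx)).mono_set ?_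
      rintro t ⟨htS, htx⟩
      rcases le_total t c with h | h
      · exact Or.inl ⟨htS, h⟩
      · exact Or.inr ⟨h, le_of_lt htx⟩
  have hψint : ∀ x ∈ S, IntegrableOn (fun t => ψ t ^ 2 * w t) (S ∩ Ioi x) := by
    intro x hx
    rcases le_total c x with hcx | hxc
    · exact hψ_right.mono_set fun t ht => ⟨ht.1, le_trans hcx (le_of_lt ht.2)⟩
    · refine (hψ_right.union (hψ_loc x hx c hc)).mono_set ?_
      rintro t ⟨htS, htx⟩
      rcases le_total c t with h | h
      · exact Or.inl ⟨htS, h⟩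
      · exact Or.inr ⟨le_of_lt htx, h⟩
  have hFfin : ∀ x ∈ S, F x ≠ ⊤ := fun x hx =>
    ne_of_lt (lt_of_le_of_lt (lintegral_ofReal_le_lintegral_enorm _) (hφint x hx).2)
  have hGfin : ∀ x ∈ S, G x ≠ ⊤ := fun x hx =>
    ne_of_lt (lt_of_le_of_lt (lintegral_ofReal_le_lintegral_enorm _) (hψint x hx).2)
  have hφ2m : Measurable fun t => ENNReal.ofReal (φ t ^ 2 * w t) :=
    ((hφ_meas.pow_const 2).mul hw_meas).ennreal_ofReal
  have hψ2m : Measurable fun t => ENNReal.ofReal (ψ t ^ 2 * w t) :=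
    ((hψ_meas.pow_const 2).mul hw_meas).ennreal_ofReal
  have hFpos : ∀ x ∈ S, 0 < F x := by
    intro x hx
    refine pos_iff_ne_zero.mpr fun h0 => ?_
    have hae := (lintegral_eq_zero_iff hφ2m).mp h0
    have hle : (fun t => φ t ^ 2 * w t) ≤ᵐ[volume.restrict (S ∩ Iio x)] 0 := by
      filter_upwards [hae] with t ht
      exact ENNReal.ofReal_eq_zero.mp ht
    exact absurd (hφ_pos x hx) (not_lt.mpr (integral_nonpos_of_ae hle))
  have hGpos : ∀ x ∈ S, 0 < G x := by
    intro x hx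
    refine pos_iff_ne_zero.mpr fun h0 => ?_
    have hae := (lintegral_eq_zero_iff hψ2m).mp h0
    have hle : (fun t => ψ t ^ 2 * w t) ≤ᵐ[volume.restrict (S ∩ Ioi x)] 0 := by
      filter_upwards [hae] with t ht
      exact ENNReal.ofReal_eq_zero.mp ht
    exact absurd (hψ_pos x hx) (not_lt.mpr (integral_nonpos_of_ae hle))
  have hKb : ∀ x ∈ S, F x ^ ((1:ℝ)/2) * G x ^ ((1:ℝ)/2) ≤ K := by
    intro x hx
    rw [hK]
    exact le_iSup₂ (f := fun (x : ℝ) (_ : x ∈ S) =>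
      (∫⁻ t in S ∩ Iio x, ENNReal.ofReal (φ t ^ 2 * w t)) ^ (1 / 2 : ℝ) *
        (∫⁻ t in S ∩ Ioi x, ENNReal.ofReal (ψ t ^ 2 * w t)) ^ (1 / 2 : ℝ)) x hx
  -- pointwise norm identities
  have hnnφ : ∀ (g : ℝ → ℂ) (t : ℝ), t ∈ S →
      ((‖(φ t : ℂ) * g t * (w t : ℂ)‖₊ : ℝ≥0∞))
        = fφ t ^ ((1:ℝ)/2) * ((‖g t‖₊ : ℝ≥0∞) ^ (2:ℕ) * ENNReal.ofReal (w t)) ^ ((1:ℝ)/2) := by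
    intro g t ht
    have hw' : (‖w t‖₊ : ℝ≥0∞) = ENNReal.ofReal (w t) := Real.enorm_eq_ofReal (hw_pos t ht).le
    rw [hfφdef]
    simp only
    rw [half_mul, half_mul]
    calc (‖(φ t : ℂ) * g t * (w t : ℂ)‖₊ : ℝ≥0∞)
        = (‖φ t‖₊ : ℝ≥0∞) * (‖g t‖₊ : ℝ≥0∞) * ENNReal.ofReal (w t) := by
          rw [nnnorm_mul, nnnorm_mul, nnnorm_complex_ofReal, nnnorm_complex_ofReal,
            ENNReal.coe_mul, ENNReal.coe_mul, hw']
      _ = (‖φ t‖₊ : ℝ≥0∞) * (‖g t‖₊ : ℝ≥0∞)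
            * (ENNReal.ofReal (w t) ^ ((1:ℝ)/2) * ENNReal.ofReal (w t) ^ ((1:ℝ)/2)) := by
          rw [half_mul_half]
      _ = (‖φ t‖₊ : ℝ≥0∞) * ENNReal.ofReal (w t) ^ ((1:ℝ)/2)
            * ((‖g t‖₊ : ℝ≥0∞) * ENNReal.ofReal (w t) ^ ((1:ℝ)/2)) := by ring
  have hnnψ : ∀ (g : ℝ → ℂ) (t : ℝ), t ∈ S →
      ((‖(ψ t : ℂ) * g t * (w t : ℂ)‖₊ : ℝ≥0∞))
        = fψ t ^ ((1:ℝ)/2) * ((‖g t‖₊ : ℝ≥0∞) ^ (2:ℕ) * ENNReal.ofReal (w t)) ^ ((1:ℝ)/2) := by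
    intro g t ht
    have hw' : (‖w t‖₊ : ℝ≥0∞) = ENNReal.ofReal (w t) := Real.enorm_eq_ofReal (hw_pos t ht).le
    rw [hfψdef]
    simp only
    rw [half_mul, half_mul]
    calc (‖(ψ t : ℂ) * g t * (w t : ℂ)‖₊ : ℝ≥0∞)
        = (‖ψ t‖₊ : ℝ≥0∞) * (‖g t‖₊ : ℝ≥0∞) * ENNReal.ofReal (w t) := by
          rw [nnnorm_mul, nnnorm_mul, nnnorm_complex_ofReal, nnnorm_complex_ofReal,
            ENNReal.coe_mul, ENNReal.coe_mul, hw']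
      _ = (‖ψ t‖₊ : ℝ≥0∞) * (‖g t‖₊ : ℝ≥0∞)
            * (ENNReal.ofReal (w t) ^ ((1:ℝ)/2) * ENNReal.ofReal (w t) ^ ((1:ℝ)/2)) := by
          rw [half_mul_half]
      _ = (‖ψ t‖₊ : ℝ≥0∞) * ENNReal.ofReal (w t) ^ ((1:ℝ)/2)
            * ((‖g t‖₊ : ℝ≥0∞) * ENNReal.ofReal (w t) ^ ((1:ℝ)/2)) := by ring
  -- main estimate for the B-shaped operator
  have mainB : ∀ g : ℝ → ℂ, Measurable g →
      wL2norm S w (fun x => (ψ x : ℂ) * ∫ t in S ∩ Iio x, (φ t : ℂ) * g t * (w t : ℂ))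
        ≤ 2 * K * wL2norm S w g := by
    intro g hgm
    set q : ℝ → ℝ≥0∞ := fun t => (‖g t‖₊ : ℝ≥0∞) ^ (2:ℕ) * ENNReal.ofReal (w t) with hqdef
    have hqm : Measurable q :=
      ((hgm.nnnorm).coe_nnreal_ennreal.pow_const 2).mul hw_meas.ennreal_ofReal
    have step : ∫⁻ x in S,
        (‖(ψ x : ℂ) * ∫ t in S ∩ Iio x, (φ t : ℂ) * g t * (w t : ℂ)‖₊ : ℝ≥0∞) ^ (2:ℕ)
          * ENNReal.ofReal (w x)
        ≤ ∫⁻ x in S, fψ x * (∫⁻ t in S ∩ Iio x, fφ t ^ ((1:ℝ)/2) * q t ^ ((1:ℝ)/2)) ^ (2:ℕ) := by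
      refine lintegral_mono_ae ?_
      filter_upwards [ae_restrict_mem hSm] with x hx
      have h1 : (‖(ψ x : ℂ) * ∫ t in S ∩ Iio x, (φ t : ℂ) * g t * (w t : ℂ)‖₊ : ℝ≥0∞) ^ (2:ℕ)
          * ENNReal.ofReal (w x)
          = fψ x * (‖∫ t in S ∩ Iio x, (φ t : ℂ) * g t * (w t : ℂ)‖₊ : ℝ≥0∞) ^ (2:ℕ) := by
        rw [nnnorm_mul, nnnorm_complex_ofReal, ENNReal.coe_mul, hfψdef]
        ring
      rw [h1]
      refine mul_le_mul_right ?_ _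
      refine pow_le_pow_left₀ zero_le ?_ 2
      refine le_trans (enorm_integral_le_lintegral_enorm _) (le_of_eq ?_)
      refine lintegral_congr_ae ?_
      filter_upwards [ae_restrict_mem (hSm.inter measurableSet_Iio)] with t ht
      exact hnnφ g t ht.1
    have hcore := coreB S hSm fφ fψ q hfφm hfψm hqm
      (fun x hx => by rw [← hFφ x]; exact hFfin x hx)
      (fun x hx => by rw [← hFφ x]; exact hFpos x hx)
      (fun x hx => by rw [← hGψ x]; exact hGfin x hx)
      (fun x hx => by rw [← hGψ x]; exact hGpos x hx)
      K (fun x hx => by rw [← hFφ x, ← hGψ x]; exact hKb x hx)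
    simp only [wL2norm]
    calc (∫⁻ x in S,
          (‖(ψ x : ℂ) * ∫ t in S ∩ Iio x, (φ t : ℂ) * g t * (w t : ℂ)‖₊ : ℝ≥0∞) ^ 2
            * ENNReal.ofReal (w x)) ^ (1/2 : ℝ)
        ≤ (4 * K ^ (2:ℕ) * ∫⁻ t in S, q t) ^ (1/2 : ℝ) :=
          ENNReal.rpow_le_rpow (le_trans step hcore) (by norm_num)
      _ = 2 * K * (∫⁻ t in S, q t) ^ (1/2 : ℝ) := by
          rw [show (4 : ℝ≥0∞) * K ^ (2:ℕ) = (2 * K) ^ (2:ℕ) by ring,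
            ENNReal.mul_rpow_of_nonneg _ _ (by norm_num : (0:ℝ) ≤ 1/2), sq_rpow_half]
  -- main estimate for the A-shaped operator
  have mainA : ∀ g : ℝ → ℂ, Measurable g →
      wL2norm S w (fun x => (φ x : ℂ) * ∫ t in S ∩ Ioi x, (ψ t : ℂ) * g t * (w t : ℂ))
        ≤ 2 * K * wL2norm S w g := by
    intro g hgm
    set q : ℝ → ℝ≥0∞ := fun t => (‖g t‖₊ : ℝ≥0∞) ^ (2:ℕ) * ENNReal.ofReal (w t) with hqdef
    have hqm : Measurable q :=
      ((hgm.nnnorm).coe_nnreal_ennreal.pow_const 2).mul hw_meas.ennreal_ofReal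
    have step : ∫⁻ x in S,
        (‖(φ x : ℂ) * ∫ t in S ∩ Ioi x, (ψ t : ℂ) * g t * (w t : ℂ)‖₊ : ℝ≥0∞) ^ (2:ℕ)
          * ENNReal.ofReal (w x)
        ≤ ∫⁻ x in S, fφ x * (∫⁻ t in S ∩ Ioi x, fψ t ^ ((1:ℝ)/2) * q t ^ ((1:ℝ)/2)) ^ (2:ℕ) := by
      refine lintegral_mono_ae ?_
      filter_upwards [ae_restrict_mem hSm] with x hx
      have h1 : (‖(φ x : ℂ) * ∫ t in S ∩ Ioi x, (ψ t : ℂ) * g t * (w t : ℂ)‖₊ : ℝ≥0∞) ^ (2:ℕ)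
          * ENNReal.ofReal (w x)
          = fφ x * (‖∫ t in S ∩ Ioi x, (ψ t : ℂ) * g t * (w t : ℂ)‖₊ : ℝ≥0∞) ^ (2:ℕ) := by
        rw [nnnorm_mul, nnnorm_complex_ofReal, ENNReal.coe_mul, hfφdef]
        ring
      rw [h1]
      refine mul_le_mul_right ?_ _
      refine pow_le_pow_left₀ zero_le ?_ 2
      refine le_trans (enorm_integral_le_lintegral_enorm _) (le_of_eq ?_)
      refine lintegral_congr_ae ?_
      filter_upwards [ae_restrict_mem (hSm.inter measurableSet_Ioi)] with t ht
      exact hnnψ g t ht.1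
    have hcore := coreA S hSm fφ fψ q hfφm hfψm hqm
      (fun x hx => by rw [← hFφ x]; exact hFfin x hx)
      (fun x hx => by rw [← hFφ x]; exact hFpos x hx)
      (fun x hx => by rw [← hGψ x]; exact hGfin x hx)
      (fun x hx => by rw [← hGψ x]; exact hGpos x hx)
      K (fun x hx => by rw [← hFφ x, ← hGψ x]; exact hKb x hx)
    simp only [wL2norm]
    calc (∫⁻ x in S,
          (‖(φ x : ℂ) * ∫ t in S ∩ Ioi x, (ψ t : ℂ) * g t * (w t : ℂ)‖₊ : ℝ≥0∞) ^ 2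
            * ENNReal.ofReal (w x)) ^ (1/2 : ℝ)
        ≤ (4 * K ^ (2:ℕ) * ∫⁻ t in S, q t) ^ (1/2 : ℝ) :=
          ENNReal.rpow_le_rpow (le_trans step hcore) (by norm_num)
      _ = 2 * K * (∫⁻ t in S, q t) ^ (1/2 : ℝ) := by
          rw [show (4 : ℝ≥0∞) * K ^ (2:ℕ) = (2 * K) ^ (2:ℕ) by ring,
            ENNReal.mul_rpow_of_nonneg _ _ (by norm_num : (0:ℝ) ≤ 1/2), sq_rpow_half]
  -- Part 2 : the 2K bound for arbitrary a.e. strongly measurable g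
  have part2 : ∀ g : ℝ → ℂ, AEStronglyMeasurable g (volume.restrict S) →
      wL2norm S w g < ⊤ →
        wL2norm S w (A g) ≤ 2 * K * wL2norm S w g ∧
        wL2norm S w (B g) ≤ 2 * K * wL2norm S w g := by
    intro g hg _
    set g' := hg.mk g with hg'def
    have hgsm := hg.stronglyMeasurable_mk
    have hae := hg.ae_eq_mk
    have hwg : wL2norm S w g = wL2norm S w g' := by
      simp only [wL2norm]
      congr 1
      refine lintegral_congr_ae ?_
      filter_upwards [hae] with t ht
      rw [ht]
    have hAeq : wL2norm S w (A g)
        = wL2norm S w (fun x => (φ x : ℂ) * ∫ t in S ∩ Ioi x, (ψ t : ℂ) * g' t * (w t : ℂ)) := by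
      have hpt : ∀ x, A g x = (φ x : ℂ) * ∫ t in S ∩ Ioi x, (ψ t : ℂ) * g' t * (w t : ℂ) := by
        intro x
        rw [hA g x]
        congr 1
        refine integral_congr_ae ?_
        have h' : g =ᵐ[volume.restrict (S ∩ Ioi x)] g' :=
          ae_restrict_of_ae_restrict_of_subset inter_subset_left hae
        filter_upwards [h'] with t ht
        rw [ht]
      simp only [wL2norm]
      congr 1
      exact lintegral_congr fun x => by rw [hpt x]
    have hBeq : wL2norm S w (B g)
        = wL2norm S w (fun x => (ψ x : ℂ) * ∫ t in S ∩ Iio x, (φ t : ℂ) * g' t * (w t : ℂ)) := by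
      have hpt : ∀ x, B g x = (ψ x : ℂ) * ∫ t in S ∩ Iio x, (φ t : ℂ) * g' t * (w t : ℂ) := by
        intro x
        rw [hB g x]
        congr 1
        refine integral_congr_ae ?_
        have h' : g =ᵐ[volume.restrict (S ∩ Iio x)] g' :=
          ae_restrict_of_ae_restrict_of_subset inter_subset_left hae
        filter_upwards [h'] with t ht
        rw [ht]
      simp only [wL2norm]
      congr 1
      exact lintegral_congr fun x => by rw [hpt x]
    rw [hAeq, hBeq, hwg]
    exact ⟨mainA g' hgsm.measurable, mainB g' hgsm.measurable⟩
  -- Forward direction of the iff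
  have forward : (∃ C : ℝ≥0, ∀ g : ℝ → ℂ, AEStronglyMeasurable g (volume.restrict S) →
      wL2norm S w g < ⊤ →
        wL2norm S w (A g) ≤ C * wL2norm S w g ∧
        wL2norm S w (B g) ≤ C * wL2norm S w g) → K ≠ ⊤ := by
    rintro ⟨C, hC⟩
    have hKC : K ≤ (C : ℝ≥0∞) := by
      rw [hK]
      refine iSup₂_le fun x hx => ?_
      set g : ℝ → ℂ := (S ∩ Iio x).indicator (fun t => (φ t : ℂ)) with hgdef
      have hgm : Measurable g :=
        (Complex.measurable_ofReal.comp hφ_meas).indicator (hSm.inter measurableSet_Iio)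
      have hN : wL2norm S w g = F x ^ (1/2 : ℝ) := by
        simp only [wL2norm]
        congr 1
        have hpt : ∀ t : ℝ, (‖g t‖₊ : ℝ≥0∞) ^ 2 * ENNReal.ofReal (w t)
            = (S ∩ Iio x).indicator fφ t := by
          intro t
          by_cases ht : t ∈ S ∩ Iio x
          · rw [hgdef]
            rw [Set.indicator_of_mem ht, Set.indicator_of_mem ht, hfφdef]
            simp only
            rw [nnnorm_complex_ofReal]
          · rw [hgdef]
            rw [Set.indicator_of_notMem ht, Set.indicator_of_notMem ht]
            simp
        rw [lintegral_congr hpt, lintegral_indicator (hSm.inter measurableSet_Iio),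
          Measure.restrict_restrict (hSm.inter measurableSet_Iio),
          Set.inter_eq_left.mpr inter_subset_left, hFφ x]
      have hNfin : wL2norm S w g < ⊤ := by
        rw [hN]
        exact ENNReal.rpow_lt_top_of_nonneg (by norm_num) (hFfin x hx)
      have hBle := (hC g hgm.aestronglyMeasurable hNfin).2
      set r : ℝ := ∫ t in S ∩ Iio x, φ t ^ 2 * w t with hrdef
      have hr : 0 < r := hφ_pos x hx
      have hwae : 0 ≤ᵐ[volume.restrict (S ∩ Iio x)] fun t => φ t ^ 2 * w t := by
        refine (ae_restrict_iff' (hSm.inter measurableSet_Iio)).mpr ?_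
        exact Filter.Eventually.of_forall fun t ht => mul_nonneg (sq_nonneg _) (hw_pos t ht.1).le
      have hFr : ENNReal.ofReal r = F x :=
        ofReal_integral_eq_lintegral_ofReal (hφint x hx) hwae
      have hBval : ∀ y : ℝ, x < y → B g y = (ψ y : ℂ) * ((r : ℝ) : ℂ) := by
        intro y hy
        rw [hB g y]
        congr 1
        have hint_eq : (fun t => (φ t : ℂ) * g t * (w t : ℂ))
            = (S ∩ Iio x).indicator (fun t => ((φ t ^ 2 * w t : ℝ) : ℂ)) := by
          funext t
          by_cases ht : t ∈ S ∩ Iio x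
          · rw [hgdef, Set.indicator_of_mem ht, Set.indicator_of_mem ht]
            push_cast
            ring
          · rw [hgdef, Set.indicator_of_notMem ht, Set.indicator_of_notMem ht,
              mul_zero, zero_mul]
        have hsub : S ∩ Iio x ⊆ S ∩ Iio y := fun t ht => ⟨ht.1, lt_trans ht.2 hy⟩
        rw [hint_eq, integral_indicator (hSm.inter measurableSet_Iio),
          Measure.restrict_restrict (hSm.inter measurableSet_Iio),
          Set.inter_eq_left.mpr hsub]
        exact integral_ofReal
      have hlow : ENNReal.ofReal r * G x ^ (1/2 : ℝ) ≤ wL2norm S w (B g) := by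
        simp only [wL2norm]
        have h1 : ∫⁻ y in S ∩ Ioi x, fψ y * (ENNReal.ofReal r) ^ (2:ℕ)
            ≤ ∫⁻ y in S, (‖B g y‖₊ : ℝ≥0∞) ^ 2 * ENNReal.ofReal (w y) := by
          refine le_trans (le_of_eq (lintegral_congr_ae ?_))
            (lintegral_mono_set inter_subset_left)
          filter_upwards [ae_restrict_mem (hSm.inter measurableSet_Ioi)] with y hy
          rw [hBval y hy.2, nnnorm_mul, nnnorm_complex_ofReal, ENNReal.coe_mul,
            nnnorm_complex_ofReal, (show (‖r‖₊ : ℝ≥0∞) = ENNReal.ofReal r from Real.enorm_eq_ofReal hr.le), hfψdef]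
          ring
        have h2 : ∫⁻ y in S ∩ Ioi x, fψ y * (ENNReal.ofReal r) ^ (2:ℕ)
            = G x * (ENNReal.ofReal r) ^ (2:ℕ) := by
          rw [lintegral_mul_const _ hfψm, ← hGψ x]
        calc ENNReal.ofReal r * G x ^ (1/2 : ℝ)
            = (G x * (ENNReal.ofReal r) ^ (2:ℕ)) ^ (1/2 : ℝ) := by
              rw [ENNReal.mul_rpow_of_nonneg _ _ (by norm_num : (0:ℝ) ≤ 1/2), sq_rpow_half,
                mul_comm]
          _ ≤ (∫⁻ y in S, (‖B g y‖₊ : ℝ≥0∞) ^ 2 * ENNReal.ofReal (w y)) ^ (1/2 : ℝ) := by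
              refine ENNReal.rpow_le_rpow ?_ (by norm_num)
              rw [← h2]
              exact h1
      have hcomb : ENNReal.ofReal r * G x ^ (1/2 : ℝ) ≤ C * F x ^ (1/2 : ℝ) := by
        refine le_trans hlow ?_
        rw [← hN]
        exact hBle
      rw [hFr] at hcomb
      have hFx0 := (hFpos x hx).ne'
      have hFxT := hFfin x hx
      have hchain : F x ^ (1/2 : ℝ) * (F x ^ (1/2 : ℝ) * G x ^ (1/2 : ℝ))
          ≤ F x ^ (1/2 : ℝ) * C := by
        calc F x ^ (1/2 : ℝ) * (F x ^ (1/2 : ℝ) * G x ^ (1/2 : ℝ))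
            = F x ^ (1/2 : ℝ) * F x ^ (1/2 : ℝ) * G x ^ (1/2 : ℝ) := by ring
          _ = F x * G x ^ (1/2 : ℝ) := by rw [half_mul_half]
          _ ≤ C * F x ^ (1/2 : ℝ) := hcomb
          _ = F x ^ (1/2 : ℝ) * C := mul_comm _ _
      exact (ENNReal.mul_le_mul_iff_right (rpow_half_ne_zero hFx0 hFxT)
        (rpow_half_ne_top hFx0 hFxT)).mp hchain
    exact ne_top_of_le_ne_top ENNReal.coe_ne_top hKC
  refine ⟨⟨forward, fun hKne => ?_⟩, part2⟩
  refine ⟨(2 * K).toNNReal, fun g hg hfin => ?_⟩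
  have hcoe : (((2 * K).toNNReal : ℝ≥0) : ℝ≥0∞) = 2 * K :=
    ENNReal.coe_toNNReal (ENNReal.mul_ne_top (by norm_num) hKne)
  rw [hcoe]
  exact part2 g hg hfin
end

section
/- If f ∈ Δ, the maximal domain of the Jacobi expression ℓ[·] in L²((-1,1); (1-x²)^{-1}dx), then f' ∈ L²((-1,1); dx) (the Dirichlet condition). In particular every f ∈ Δ extends to an absolutely continuous function on [-1,1]. -/
open MeasureTheory Set intervalIntegral

/-- Membership in the maximal domain `Δ` of the Jacobi expression
`ℓ[y](x) = -(1-x²)y''(x) + k·y(x)` in `L²((-1,1); (1-x²)⁻¹ dx)`, encoded via the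
derivative functions `f'` and `f''`: `f, f' ∈ AC_loc(-1,1)` (with locally integrable
derivatives `f'`, `f''` and the fundamental theorem of calculus representation),
`f ∈ L²((-1,1); (1-x²)⁻¹ dx)` and `ℓ[f] ∈ L²((-1,1); (1-x²)⁻¹ dx)`. -/
def InJacobiMaxDomain (k : ℝ) (f f' f'' : ℝ → ℂ) : Prop :=
  (∀ x ∈ Ioo (-1 : ℝ) 1, ∀ y ∈ Ioo (-1 : ℝ) 1, IntervalIntegrable f' volume x y) ∧
  (∀ x ∈ Ioo (-1 : ℝ) 1, ∀ y ∈ Ioo (-1 : ℝ) 1, IntervalIntegrable f'' volume x y) ∧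
  (∀ x ∈ Ioo (-1 : ℝ) 1, ∀ y ∈ Ioo (-1 : ℝ) 1, f y - f x = ∫ t in x..y, f' t) ∧
  (∀ x ∈ Ioo (-1 : ℝ) 1, ∀ y ∈ Ioo (-1 : ℝ) 1, f' y - f' x = ∫ t in x..y, f'' t) ∧
  IntegrableOn (fun x => ‖f x‖ ^ 2 * (1 - x ^ 2)⁻¹) (Ioo (-1 : ℝ) 1) ∧
  IntegrableOn
    (fun x => ‖-((1 - x ^ 2 : ℝ) : ℂ) * f'' x + (k : ℂ) * f x‖ ^ 2 * (1 - x ^ 2)⁻¹)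
    (Ioo (-1 : ℝ) 1)

lemma slice_indicator {a b t : ℝ} (ht : t ∈ Ioc a b) (ψ : ℝ → ℂ) (c : ℂ) :
    (∫ s in Ioc a b, (Iic t).indicator (fun s => c * ψ s) s) = c * ∫ s in Ioc a t, ψ s := by
  rw [MeasureTheory.integral_indicator measurableSet_Iic, Measure.restrict_restrict measurableSet_Iic]
  have : Iic t ∩ Ioc a b = Ioc a t := by
    ext s
    simp only [mem_inter_iff, mem_Iic, mem_Ioc]
    exact ⟨fun ⟨h1, h2, _⟩ => ⟨h2, h1⟩, fun ⟨h1, h2⟩ => ⟨h2, h1, h2.trans ht.2⟩⟩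
  rw [this, MeasureTheory.integral_const_mul]

lemma core_swap {a b : ℝ} {φ ψ : ℝ → ℂ}
    (hφ : IntegrableOn φ (Ioc a b)) (hψ : IntegrableOn ψ (Ioc a b)) :
    (∫ t in Ioc a b, φ t * ∫ s in Ioc a t, ψ s) +
      (∫ t in Ioc a b, ψ t * ∫ s in Ioc a t, φ s) =
    (∫ t in Ioc a b, φ t) * (∫ t in Ioc a b, ψ t) := by
  set G : ℝ × ℝ → ℂ := fun p => φ p.1 * ψ p.2 with hG
  have hGint : Integrable G ((volume.restrict (Ioc a b)).prod (volume.restrict (Ioc a b))) := hφ.mul_prod hψ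
  set S1 : Set (ℝ × ℝ) := {p | p.2 ≤ p.1} with hS1
  set S2 : Set (ℝ × ℝ) := {p | p.1 ≤ p.2} with hS2
  have hS1m : MeasurableSet S1 := measurableSet_le measurable_snd measurable_fst
  have hS2m : MeasurableSet S2 := measurableSet_le measurable_fst measurable_snd
  have h1 : Integrable (S1.indicator G) ((volume.restrict (Ioc a b)).prod (volume.restrict (Ioc a b))) := hGint.indicator hS1m
  have h2 : Integrable (S2.indicator G) ((volume.restrict (Ioc a b)).prod (volume.restrict (Ioc a b))) := hGint.indicator hS2m
  -- T1
  have hT1 : (∫ p, S1.indicator G p ∂((volume.restrict (Ioc a b)).prod (volume.restrict (Ioc a b)))) = ∫ t in Ioc a b, φ t * ∫ s in Ioc a t, ψ s := by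
    rw [integral_prod _ h1]
    refine setIntegral_congr_fun measurableSet_Ioc (fun t ht => ?_)
    have : (fun s => S1.indicator G (t, s)) = (Iic t).indicator (fun s => φ t * ψ s) := by
      ext s
      by_cases h : s ≤ t
      · rw [indicator_of_mem (by exact h : (t,s) ∈ S1), indicator_of_mem (by exact h)]
      · rw [indicator_of_notMem (by exact h : ¬ (t,s) ∈ S1), indicator_of_notMem (by exact h)]
    rw [this, slice_indicator ht]
  have hT2 : (∫ p, S2.indicator G p ∂((volume.restrict (Ioc a b)).prod (volume.restrict (Ioc a b)))) = ∫ t in Ioc a b, ψ t * ∫ s in Ioc a t, φ s := by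
    rw [integral_prod_symm _ h2]
    refine setIntegral_congr_fun measurableSet_Ioc (fun s hs => ?_)
    have : (fun t => S2.indicator G (t, s)) = (Iic s).indicator (fun t => φ t * ψ s) := by
      ext t
      by_cases h : t ≤ s
      · rw [indicator_of_mem (by exact h : (t,s) ∈ S2), indicator_of_mem (by exact h)]
      · rw [indicator_of_notMem (by exact h : ¬ (t,s) ∈ S2), indicator_of_notMem (by exact h)]
    rw [this]
    have : (Iic s).indicator (fun t => φ t * ψ s) = (Iic s).indicator (fun t => ψ s * φ t) := by
      ext t; simp [indicator_apply, mul_comm]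
    rw [this, slice_indicator hs]
  -- diagonal null
  have hdiag : ((volume.restrict (Ioc a b)).prod (volume.restrict (Ioc a b))) {p : ℝ × ℝ | p.1 = p.2} = 0 := by
    have hm : MeasurableSet {p : ℝ × ℝ | p.1 = p.2} :=
      measurableSet_eq_fun measurable_fst measurable_snd
    rw [Measure.prod_apply hm]
    have : ∀ t : ℝ, (volume.restrict (Ioc a b)) (Prod.mk t ⁻¹' {p : ℝ × ℝ | p.1 = p.2}) = 0 := by
      intro t
      have : Prod.mk t ⁻¹' {p : ℝ × ℝ | p.1 = p.2} = {s : ℝ | t = s} := rfl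
      rw [this]
      have : {s : ℝ | t = s} = {t} := by ext s; simp [eq_comm]
      rw [this]
      exact le_antisymm (le_trans (Measure.restrict_le_self _) (by simp)) (zero_le)
    simp [this]
  have hae : S1.indicator G + S2.indicator G =ᵐ[(volume.restrict (Ioc a b)).prod (volume.restrict (Ioc a b))] G := by
    rw [Filter.EventuallyEq, ae_iff]
    refine measure_mono_null (fun p hp => ?_) hdiag
    simp only [mem_setOf_eq, Pi.add_apply] at hp ⊢
    by_contra hne
    rcases le_or_gt p.2 p.1 with h | h
    · rcases lt_or_ge p.2 p.1 with h' | h'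
      · rw [indicator_of_mem (by exact h) G, indicator_of_notMem (by exact not_le.mpr h') G,
          add_zero] at hp
        exact hp rfl
      · exact hne (le_antisymm h' h)
    · rw [indicator_of_notMem (by exact not_le.mpr h) G,
        indicator_of_mem (by exact h.le) G, zero_add] at hp
      exact hp rfl
  have key := integral_congr_ae hae
  simp only [Pi.add_apply] at key
  rw [integral_add h1 h2] at key
  rw [← hT1, ← hT2, key, hG]
  exact integral_prod_mul φ ψ

/-- Integration by parts for functions given by FTC representation. -/
lemma parts {a b : ℝ} (hab : a < b) {u v φ ψ : ℝ → ℂ}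
    (hφ : IntegrableOn φ (Ioc a b)) (hψ : IntegrableOn ψ (Ioc a b))
    (hu : ∀ y ∈ Ioc a b, u y = u a + ∫ s in Ioc a y, φ s)
    (hv : ∀ y ∈ Ioc a b, v y = v a + ∫ s in Ioc a y, ψ s) :
    (∫ t in Ioc a b, (φ t * v t + u t * ψ t)) = u b * v b - u a * v a := by
  set P : ℝ → ℂ := fun t => ∫ s in Ioc a t, ψ s with hP
  set Q : ℝ → ℂ := fun t => ∫ s in Ioc a t, φ s with hQ
  have hφicc : IntegrableOn φ (Icc a b) := hφ.congr_set_ae (Ioc_ae_eq_Icc).symm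
  have hψicc : IntegrableOn ψ (Icc a b) := hψ.congr_set_ae (Ioc_ae_eq_Icc).symm
  have hPc : ContinuousOn P (Icc a b) := continuousOn_primitive hψicc
  have hQc : ContinuousOn Q (Icc a b) := continuousOn_primitive hφicc
  obtain ⟨C1, hC1⟩ := isCompact_Icc.exists_bound_of_continuousOn hPc
  obtain ⟨C2, hC2⟩ := isCompact_Icc.exists_bound_of_continuousOn hQc
  have hPm : AEStronglyMeasurable P (volume.restrict (Ioc a b)) :=
    (hPc.mono Ioc_subset_Icc_self).aestronglyMeasurable measurableSet_Ioc
  have hQm : AEStronglyMeasurable Q (volume.restrict (Ioc a b)) :=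
    (hQc.mono Ioc_subset_Icc_self).aestronglyMeasurable measurableSet_Ioc
  have hPbd : ∀ᵐ x ∂(volume.restrict (Ioc a b)), ‖P x‖ ≤ C1 := by
    filter_upwards [ae_restrict_mem measurableSet_Ioc] with x hx
    exact hC1 x (Ioc_subset_Icc_self hx)
  have hQbd : ∀ᵐ x ∂(volume.restrict (Ioc a b)), ‖Q x‖ ≤ C2 := by
    filter_upwards [ae_restrict_mem measurableSet_Ioc] with x hx
    exact hC2 x (Ioc_subset_Icc_self hx)
  have hφP : IntegrableOn (fun t => φ t * P t) (Ioc a b) := by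
    have := Integrable.bdd_mul hφ hPm hPbd
    exact this.congr (Filter.Eventually.of_forall fun t => mul_comm _ _)
  have hψQ : IntegrableOn (fun t => ψ t * Q t) (Ioc a b) := by
    have := Integrable.bdd_mul hψ hQm hQbd
    exact this.congr (Filter.Eventually.of_forall fun t => mul_comm _ _)
  have step1 : (∫ t in Ioc a b, (φ t * v t + u t * ψ t)) =
      ∫ t in Ioc a b, (φ t * (v a + P t) + (u a + Q t) * ψ t) := by
    refine setIntegral_congr_fun measurableSet_Ioc (fun t ht => ?_)
    rw [hu t ht, hv t ht]
  rw [step1]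
  have i1 : IntegrableOn (fun t => φ t * (v a + P t)) (Ioc a b) := by
    have : (fun t => φ t * (v a + P t)) = fun t => φ t * v a + φ t * P t := by
      ext t; ring
    rw [this]
    exact (hφ.mul_const (v a)).add hφP
  have i2 : IntegrableOn (fun t => (u a + Q t) * ψ t) (Ioc a b) := by
    have : (fun t => (u a + Q t) * ψ t) = fun t => u a * ψ t + ψ t * Q t := by
      ext t; ring
    rw [this]
    exact (hψ.const_mul (u a)).add hψQ
  rw [integral_add i1 i2]
  have e1 : (∫ t in Ioc a b, φ t * (v a + P t)) =
      v a * (∫ t in Ioc a b, φ t) + ∫ t in Ioc a b, φ t * P t := by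
    have : (fun t => φ t * (v a + P t)) = fun t => v a * φ t + φ t * P t := by
      ext t; ring
    rw [this, integral_add (hφ.const_mul (v a)) hφP, MeasureTheory.integral_const_mul]
  have e2 : (∫ t in Ioc a b, (u a + Q t) * ψ t) =
      u a * (∫ t in Ioc a b, ψ t) + ∫ t in Ioc a b, ψ t * Q t := by
    have : (fun t => (u a + Q t) * ψ t) = fun t => u a * ψ t + ψ t * Q t := by
      ext t; ring
    rw [this, integral_add (hψ.const_mul (u a)) hψQ, MeasureTheory.integral_const_mul]
  rw [e1, e2]
  have hub : (∫ t in Ioc a b, φ t) = u b - u a := by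
    rw [hu b ⟨hab, le_rfl⟩]; ring
  have hvb : (∫ t in Ioc a b, ψ t) = v b - v a := by
    rw [hv b ⟨hab, le_rfl⟩]; ring
  have hcore := core_swap hφ hψ
  rw [hub, hvb] at *
  -- now: v a * (u b - u a) + ∫ φ P + (u a * (v b - v a) + ∫ ψ Q) = u b v b - u a v a
  have : (∫ t in Ioc a b, φ t * P t) + (∫ t in Ioc a b, ψ t * Q t)
      = (u b - u a) * (v b - v a) := hcore
  linear_combination this

lemma cont_of_ftc {u u' : ℝ → ℂ}
    (hint : ∀ x ∈ Ioo (-1:ℝ) 1, ∀ y ∈ Ioo (-1:ℝ) 1, IntervalIntegrable u' volume x y)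
    (hftc : ∀ x ∈ Ioo (-1:ℝ) 1, ∀ y ∈ Ioo (-1:ℝ) 1, u y - u x = ∫ t in x..y, u' t) :
    ContinuousOn u (Ioo (-1:ℝ) 1) := by
  intro x₀ hx₀
  obtain ⟨hx₁, hx₂⟩ := hx₀
  set a : ℝ := (-1 + x₀) / 2 with ha
  set b : ℝ := (x₀ + 1) / 2 with hb
  have haI : a ∈ Ioo (-1:ℝ) 1 := by constructor <;> [linarith; linarith]
  have hbI : b ∈ Ioo (-1:ℝ) 1 := by constructor <;> [linarith; linarith]
  have hax : a < x₀ := by linarith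
  have hxb : x₀ < b := by linarith
  have hab : a ≤ b := by linarith
  have hsub : Icc a b ⊆ Ioo (-1:ℝ) 1 := fun y hy => ⟨by linarith [hy.1], by linarith [hy.2]⟩
  have hIcc : IntegrableOn u' (uIcc a b) := by
    rw [uIcc_of_le hab]
    exact ((hint a haI b hbI).1).congr_set_ae (Ioc_ae_eq_Icc).symm
  have hcont : ContinuousOn (fun y => u a + ∫ t in a..y, u' t) (Icc a b) := by
    have := continuousOn_primitive_interval (a := a) (b := b) (f := u') (μ := volume) hIcc
    rw [uIcc_of_le hab] at this
    exact continuousOn_const.add this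
  have heq : ∀ y ∈ Icc a b, u y = u a + ∫ t in a..y, u' t := by
    intro y hy
    have := hftc a haI y (hsub hy)
    linear_combination this
  have : ContinuousOn u (Icc a b) := hcont.congr heq
  exact (this.continuousAt (Icc_mem_nhds hax hxb)).continuousWithinAt

lemma deriv_of_ftc {u u' : ℝ → ℂ}
    (hint : ∀ x ∈ Ioo (-1:ℝ) 1, ∀ y ∈ Ioo (-1:ℝ) 1, IntervalIntegrable u' volume x y)
    (hftc : ∀ x ∈ Ioo (-1:ℝ) 1, ∀ y ∈ Ioo (-1:ℝ) 1, u y - u x = ∫ t in x..y, u' t)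
    (hcont : ContinuousOn u' (Ioo (-1:ℝ) 1)) :
    ∀ x ∈ Ioo (-1:ℝ) 1, HasDerivAt u (u' x) x := by
  intro x hx
  obtain ⟨hx₁, hx₂⟩ := hx
  set a : ℝ := (-1 + x) / 2 with ha
  have haI : a ∈ Ioo (-1:ℝ) 1 := by constructor <;> [linarith; linarith]
  have hprim : HasDerivAt (fun y => ∫ t in a..y, u' t) (u' x) x := by
    refine integral_hasDerivAt_right (hint a haI x ⟨hx₁, hx₂⟩) ?_ ?_
    · exact hcont.stronglyMeasurableAtFilter isOpen_Ioo x ⟨hx₁, hx₂⟩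
    · exact hcont.continuousAt (isOpen_Ioo.mem_nhds ⟨hx₁, hx₂⟩)
  have heq : (fun y => u a + ∫ t in a..y, u' t) =ᶠ[nhds x] u := by
    filter_upwards [isOpen_Ioo.mem_nhds (⟨hx₁, hx₂⟩ : x ∈ Ioo (-1:ℝ) 1)] with y hy
    have := hftc a haI y hy
    linear_combination -this
  have h2 := ((hasDerivAt_const x (u a)).add hprim).congr_of_eventuallyEq heq.symm
  simpa using h2

lemma normsq_deriv {f : ℝ → ℂ} {d : ℂ} {x : ℝ} (h : HasDerivAt f d x) :
    HasDerivAt (fun y => ‖f y‖ ^ 2) (2 * (d * (starRingEnd ℂ) (f x)).re) x := by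
  have hre : HasDerivAt (fun y => (f y).re) d.re x :=
    (Complex.reCLM.hasFDerivAt.comp_hasDerivAt x h)
  have him : HasDerivAt (fun y => (f y).im) d.im x :=
    (Complex.imCLM.hasFDerivAt.comp_hasDerivAt x h)
  have h1 : HasDerivAt (fun y => (f y).re ^ 2 + (f y).im ^ 2)
      (2 * (f x).re ^ 1 * d.re + 2 * (f x).im ^ 1 * d.im) x :=
    (hre.pow 2).add (him.pow 2)
  have heq : (fun y => ‖f y‖ ^ 2) = fun y => (f y).re ^ 2 + (f y).im ^ 2 := by
    ext y
    rw [← Complex.normSq_eq_norm_sq, Complex.normSq_apply]; ring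
  rw [heq]
  convert h1 using 1
  simp [Complex.mul_re, Complex.conj_re, Complex.conj_im]
  ring

lemma claim_right {f f' : ℝ → ℂ}
    (hfderiv : ∀ x ∈ Ioo (-1:ℝ) 1, HasDerivAt f (f' x) x)
    (h5 : IntegrableOn (fun x => ‖f x‖ ^ 2 * (1 - x ^ 2)⁻¹) (Ioo (-1:ℝ) 1)) :
    ∀ c ∈ Ioo (0:ℝ) 1, ∃ b ∈ Ioo c 1, (f' b * (starRingEnd ℂ) (f b)).re ≤ 0 := by
  by_contra hcon
  push_neg at hcon
  obtain ⟨c, hc, hpos⟩ := hcon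
  obtain ⟨hc0, hc1⟩ := hc
  have hsub : Ioo c 1 ⊆ Ioo (-1:ℝ) 1 := fun x hx => ⟨by linarith [hx.1], hx.2⟩
  set N : ℝ → ℝ := fun x => ‖f x‖ ^ 2 with hN
  have hNderiv : ∀ x ∈ Ioo c 1, HasDerivAt N (2 * (f' x * (starRingEnd ℂ) (f x)).re) x :=
    fun x hx => normsq_deriv (hfderiv x (hsub hx))
  have hmono : StrictMonoOn N (Ioo c 1) := by
    refine strictMonoOn_of_hasDerivWithinAt_pos (f' := fun x => 2 * (f' x * (starRingEnd ℂ) (f x)).re) (convex_Ioo c 1)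
      (fun x hx => (hNderiv x hx).continuousAt.continuousWithinAt) ?_ ?_
    · intro x hx
      rw [interior_Ioo] at hx
      exact (hNderiv x hx).hasDerivWithinAt
    · intro x hx
      rw [interior_Ioo] at hx
      have := hpos x hx
      show 0 < 2 * (f' x * (starRingEnd ℂ) (f x)).re
      linarith
  set c1 : ℝ := (c + 1) / 2 with hc1def
  set c2 : ℝ := (3 * c + 1) / 4 with hc2def
  have hc1I : c1 ∈ Ioo c 1 := ⟨by linarith, by linarith⟩
  have hc2I : c2 ∈ Ioo c 1 := ⟨by linarith, by linarith⟩
  have hc2c1 : c2 < c1 := by rw [hc1def, hc2def]; linarith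
  have hNpos : 0 < N c1 := by
    have h1 := hmono hc2I hc1I hc2c1
    have h2 : 0 ≤ N c2 := sq_nonneg _
    linarith
  have hlower : ∀ x ∈ Ioo c1 1, N c1 ≤ N x := by
    intro x hx
    exact (hmono hc1I ⟨by linarith [hx.1], hx.2⟩ hx.1).le
  have hsub2 : Ioo c1 1 ⊆ Ioo (-1:ℝ) 1 := fun x hx => ⟨by linarith [hx.1], hx.2⟩
  have hbig : IntegrableOn (fun x => ‖f x‖ ^ 2 * (1 - x ^ 2)⁻¹) (Ioo c1 1) :=
    h5.mono_set hsub2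
  have key : IntegrableOn (fun x => (1 - x)⁻¹) (Ioo c1 1) := by
    refine Integrable.mono' (hbig.const_mul (2 / N c1)) ?_ ?_
    · refine (ContinuousOn.aestronglyMeasurable ?_ measurableSet_Ioo)
      refine ContinuousOn.inv₀ (by fun_prop) ?_
      intro x hx
      have := hx.2
      intro h
      have : (1:ℝ) = x := by linarith [sub_eq_zero.mp h]
      linarith [hx.2]
    · filter_upwards [ae_restrict_mem measurableSet_Ioo] with x hx
      obtain ⟨hx1, hx2⟩ := hx
      have hu : (0:ℝ) < 1 - x := by linarith
      have hv : (0:ℝ) < 1 - x ^ 2 := by nlinarith [hc0]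
      have hvu : 1 - x ^ 2 ≤ 2 * (1 - x) := by nlinarith
      have hA : N c1 ≤ ‖f x‖ ^ 2 := hlower x ⟨hx1, hx2⟩
      rw [Real.norm_eq_abs, abs_of_pos (inv_pos.mpr hu)]
      have step1 : (1 - x)⁻¹ = 2 * (2 * (1 - x))⁻¹ := by
        rw [mul_inv]; ring
      have step2 : (2 * (1 - x))⁻¹ ≤ (1 - x ^ 2)⁻¹ := inv_anti₀ hv hvu
      have step3 : 2 * (1 - x ^ 2)⁻¹ ≤ 2 / N c1 * (‖f x‖ ^ 2 * (1 - x ^ 2)⁻¹) := by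
        have : 2 / N c1 * (N c1 * (1 - x ^ 2)⁻¹) = 2 * (1 - x ^ 2)⁻¹ := by
          field_simp
        rw [← this]
        gcongr
      calc (1 - x)⁻¹ = 2 * (2 * (1 - x))⁻¹ := step1
        _ ≤ 2 * (1 - x ^ 2)⁻¹ := by linarith
        _ ≤ 2 / N c1 * (‖f x‖ ^ 2 * (1 - x ^ 2)⁻¹) := step3
  have hII : IntervalIntegrable (fun x => (1 - x)⁻¹) volume c1 1 := by
    rw [intervalIntegrable_iff_integrableOn_Ioo_of_le (by linarith : c1 ≤ 1)]
    exact key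
  have hII2 : IntervalIntegrable (fun x => (x - 1)⁻¹) volume c1 1 := by
    have heq : (fun x : ℝ => (x - 1)⁻¹) = fun x => -((1 - x)⁻¹) := by
      ext x
      rw [← inv_neg, neg_sub]
    rw [heq]
    exact hII.neg
  rw [intervalIntegrable_sub_inv_iff] at hII2
  rcases hII2 with h | h
  · linarith
  · exact h (right_mem_uIcc)

lemma claim_left {f f' : ℝ → ℂ}
    (hfderiv : ∀ x ∈ Ioo (-1:ℝ) 1, HasDerivAt f (f' x) x)
    (h5 : IntegrableOn (fun x => ‖f x‖ ^ 2 * (1 - x ^ 2)⁻¹) (Ioo (-1:ℝ) 1)) :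
    ∀ c ∈ Ioo (-1:ℝ) 0, ∃ a ∈ Ioo (-1:ℝ) c, 0 ≤ (f' a * (starRingEnd ℂ) (f a)).re := by
  by_contra hcon
  push_neg at hcon
  obtain ⟨c, hc, hpos⟩ := hcon
  obtain ⟨hc0, hc1⟩ := hc
  have hsub : Ioo (-1:ℝ) c ⊆ Ioo (-1:ℝ) 1 := fun x hx => ⟨hx.1, by linarith [hx.2]⟩
  set N : ℝ → ℝ := fun x => ‖f x‖ ^ 2 with hN
  have hNderiv : ∀ x ∈ Ioo (-1:ℝ) c, HasDerivAt N (2 * (f' x * (starRingEnd ℂ) (f x)).re) x :=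
    fun x hx => normsq_deriv (hfderiv x (hsub hx))
  have hmono : StrictAntiOn N (Ioo (-1:ℝ) c) := by
    refine strictAntiOn_of_hasDerivWithinAt_neg
      (f' := fun x => 2 * (f' x * (starRingEnd ℂ) (f x)).re) (convex_Ioo (-1:ℝ) c)
      (fun x hx => (hNderiv x hx).continuousAt.continuousWithinAt) ?_ ?_
    · intro x hx
      rw [interior_Ioo] at hx
      exact (hNderiv x hx).hasDerivWithinAt
    · intro x hx
      rw [interior_Ioo] at hx
      have := hpos x hx
      show 2 * (f' x * (starRingEnd ℂ) (f x)).re < 0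
      linarith
  set c1 : ℝ := (c - 1) / 2 with hc1def
  set c2 : ℝ := (3 * c - 1) / 4 with hc2def
  have hc1I : c1 ∈ Ioo (-1:ℝ) c := ⟨by linarith, by linarith⟩
  have hc2I : c2 ∈ Ioo (-1:ℝ) c := ⟨by linarith, by linarith⟩
  have hc1c2 : c1 < c2 := by rw [hc1def, hc2def]; linarith
  have hNpos : 0 < N c1 := by
    have h1 := hmono hc1I hc2I hc1c2
    have h2 : 0 ≤ N c2 := sq_nonneg _
    linarith
  have hlower : ∀ x ∈ Ioo (-1:ℝ) c1, N c1 ≤ N x := by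
    intro x hx
    exact (hmono ⟨hx.1, by linarith [hx.2]⟩ hc1I hx.2).le
  have hsub2 : Ioo (-1:ℝ) c1 ⊆ Ioo (-1:ℝ) 1 := fun x hx => ⟨hx.1, by linarith [hx.2]⟩
  have hbig : IntegrableOn (fun x => ‖f x‖ ^ 2 * (1 - x ^ 2)⁻¹) (Ioo (-1:ℝ) c1) :=
    h5.mono_set hsub2
  have key : IntegrableOn (fun x => (1 + x)⁻¹) (Ioo (-1:ℝ) c1) := by
    refine Integrable.mono' (hbig.const_mul (2 / N c1)) ?_ ?_
    · refine (ContinuousOn.aestronglyMeasurable ?_ measurableSet_Ioo)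
      refine ContinuousOn.inv₀ (by fun_prop) ?_
      intro x hx h
      have : x = -1 := by linarith [eq_neg_of_add_eq_zero_right h]
      linarith [hx.1]
    · filter_upwards [ae_restrict_mem measurableSet_Ioo] with x hx
      obtain ⟨hx1, hx2⟩ := hx
      have hu : (0:ℝ) < 1 + x := by linarith
      have hv : (0:ℝ) < 1 - x ^ 2 := by nlinarith
      have hvu : 1 - x ^ 2 ≤ 2 * (1 + x) := by nlinarith
      have hA : N c1 ≤ ‖f x‖ ^ 2 := hlower x ⟨hx1, hx2⟩
      rw [Real.norm_eq_abs, abs_of_pos (inv_pos.mpr hu)]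
      have step1 : (1 + x)⁻¹ = 2 * (2 * (1 + x))⁻¹ := by
        rw [mul_inv]; ring
      have step2 : (2 * (1 + x))⁻¹ ≤ (1 - x ^ 2)⁻¹ := inv_anti₀ hv hvu
      have step3 : 2 * (1 - x ^ 2)⁻¹ ≤ 2 / N c1 * (‖f x‖ ^ 2 * (1 - x ^ 2)⁻¹) := by
        have : 2 / N c1 * (N c1 * (1 - x ^ 2)⁻¹) = 2 * (1 - x ^ 2)⁻¹ := by
          field_simp
        rw [← this]
        gcongr
      calc (1 + x)⁻¹ = 2 * (2 * (1 + x))⁻¹ := step1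
        _ ≤ 2 * (1 - x ^ 2)⁻¹ := by linarith
        _ ≤ 2 / N c1 * (‖f x‖ ^ 2 * (1 - x ^ 2)⁻¹) := step3
  have hII : IntervalIntegrable (fun x => (1 + x)⁻¹) volume (-1) c1 := by
    rw [intervalIntegrable_iff_integrableOn_Ioo_of_le (by linarith : (-1:ℝ) ≤ c1)]
    exact key
  have hII2 : IntervalIntegrable (fun x => (x - (-1))⁻¹) volume (-1) c1 := by
    have heq : (fun x : ℝ => (x - (-1))⁻¹) = fun x => (1 + x)⁻¹ := by
      ext x; rw [sub_neg_eq_add, add_comm]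
    rw [heq]
    exact hII
  rw [intervalIntegrable_sub_inv_iff] at hII2
  rcases hII2 with h | h
  · linarith
  · exact h (left_mem_uIcc)

lemma integrable_conj' {α : Type*} [MeasurableSpace α] {μ : Measure α} {g : α → ℂ}
    (hg : Integrable g μ) : Integrable (fun x => (starRingEnd ℂ) (g x)) μ := by
  refine (hg.norm).mono' ?_ (Filter.Eventually.of_forall fun x => ?_)
  · exact (RCLike.continuous_conj (K := ℂ)).comp_aestronglyMeasurable hg.1
  · rw [RCLike.norm_conj]

lemma star_est {k : ℝ} (hk : 0 ≤ k) {f f' f'' : ℝ → ℂ}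
    (h1 : ∀ x ∈ Ioo (-1:ℝ) 1, ∀ y ∈ Ioo (-1:ℝ) 1, IntervalIntegrable f' volume x y)
    (h2 : ∀ x ∈ Ioo (-1:ℝ) 1, ∀ y ∈ Ioo (-1:ℝ) 1, IntervalIntegrable f'' volume x y)
    (h3 : ∀ x ∈ Ioo (-1:ℝ) 1, ∀ y ∈ Ioo (-1:ℝ) 1, f y - f x = ∫ t in x..y, f' t)
    (h4 : ∀ x ∈ Ioo (-1:ℝ) 1, ∀ y ∈ Ioo (-1:ℝ) 1, f' y - f' x = ∫ t in x..y, f'' t)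
    (h5 : IntegrableOn (fun x => ‖f x‖ ^ 2 * (1 - x ^ 2)⁻¹) (Ioo (-1:ℝ) 1))
    (h6 : IntegrableOn
      (fun x => ‖-((1 - x ^ 2 : ℝ) : ℂ) * f'' x + (k : ℂ) * f x‖ ^ 2 * (1 - x ^ 2)⁻¹)
      (Ioo (-1:ℝ) 1))
    (hfcont : ContinuousOn f (Ioo (-1:ℝ) 1))
    (hf'cont : ContinuousOn f' (Ioo (-1:ℝ) 1)) :
    ∃ M : ℝ, ∀ a ∈ Ioo (-1:ℝ) 1, ∀ b ∈ Ioo (-1:ℝ) 1, a < b →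
      (∫ t in Ioc a b, ‖f' t‖ ^ 2) ≤
        (f' b * (starRingEnd ℂ) (f b)).re - (f' a * (starRingEnd ℂ) (f a)).re + M := by
  classical
  set G : ℝ → ℂ := fun x => -((1 - x ^ 2 : ℝ) : ℂ) * f'' x + (k : ℂ) * f x with hG
  set D : ℝ → ℝ := fun x => (k ^ 2 + 1) * (‖f x‖ ^ 2 * (1 - x ^ 2)⁻¹) +
      ‖G x‖ ^ 2 * (1 - x ^ 2)⁻¹ with hD
  have hDint : IntegrableOn D (Ioo (-1:ℝ) 1) := (h5.const_mul _).add h6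
  set M : ℝ := ∫ x in Ioo (-1:ℝ) 1, D x with hM
  refine ⟨M, fun a ha b hb hab => ?_⟩
  have hIccsub : Icc a b ⊆ Ioo (-1:ℝ) 1 := fun y hy => ⟨by linarith [ha.1, hy.1], by linarith [hb.2, hy.2]⟩
  have hIocsub : Ioc a b ⊆ Ioo (-1:ℝ) 1 := fun y hy => hIccsub (Ioc_subset_Icc_self hy)
  -- pointwise domination of ‖f''‖‖f‖ by D on Ioo (-1) 1
  have hdom : ∀ x ∈ Ioo (-1:ℝ) 1, ‖f'' x‖ * ‖f x‖ ≤ D x := by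
    intro x hx
    have hv : (0:ℝ) < 1 - x ^ 2 := by nlinarith [hx.1, hx.2]
    have hW : ((1 - x ^ 2 : ℝ) : ℂ) * f'' x = (k : ℂ) * f x - G x := by
      rw [hG]; ring
    have hWnorm : (1 - x ^ 2) * ‖f'' x‖ ≤ k * ‖f x‖ + ‖G x‖ := by
      have e1 : ‖((1 - x ^ 2 : ℝ) : ℂ) * f'' x‖ = (1 - x ^ 2) * ‖f'' x‖ := by
        rw [norm_mul, Complex.norm_real, Real.norm_eq_abs, abs_of_pos hv]
      have e2 : ‖(k : ℂ) * f x - G x‖ ≤ k * ‖f x‖ + ‖G x‖ := by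
        refine (norm_sub_le _ _).trans ?_
        rw [norm_mul, Complex.norm_real, Real.norm_eq_abs, _root_.abs_of_nonneg hk]
      rw [← e1, hW]; exact e2
    -- ‖f''‖‖f‖ = ((1-x²)‖f''‖) * ‖f‖ * (1-x²)⁻¹ ≤ (k‖f‖+‖G‖)‖f‖ (1-x²)⁻¹ ≤ D
    have hinv : (0:ℝ) < (1 - x ^ 2)⁻¹ := inv_pos.mpr hv
    have key : ‖f'' x‖ * ‖f x‖ = ((1 - x ^ 2) * ‖f'' x‖) * ‖f x‖ * (1 - x ^ 2)⁻¹ := by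
      field_simp
    rw [key, hD]
    have step : ((1 - x ^ 2) * ‖f'' x‖) * ‖f x‖ ≤ (k ^ 2 + 1) * ‖f x‖ ^ 2 + ‖G x‖ ^ 2 := by
      nlinarith [norm_nonneg (f x), norm_nonneg (G x), norm_nonneg (f'' x),
        sq_nonneg (‖G x‖ - ‖f x‖), sq_nonneg (k - 1), sq_nonneg (k * ‖f x‖ - ‖f x‖),
        mul_nonneg (norm_nonneg (f x)) (norm_nonneg (G x))]
    calc ((1 - x ^ 2) * ‖f'' x‖) * ‖f x‖ * (1 - x ^ 2)⁻¹
        ≤ ((k ^ 2 + 1) * ‖f x‖ ^ 2 + ‖G x‖ ^ 2) * (1 - x ^ 2)⁻¹ := by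
          exact mul_le_mul_of_nonneg_right step hinv.le
      _ = (k ^ 2 + 1) * (‖f x‖ ^ 2 * (1 - x ^ 2)⁻¹) + ‖G x‖ ^ 2 * (1 - x ^ 2)⁻¹ := by ring
  -- integrability of f'' * conj f on Ioc a b
  obtain ⟨C, hC⟩ := isCompact_Icc.exists_bound_of_continuousOn (hfcont.mono hIccsub)
  have hconjm : AEStronglyMeasurable (fun t => (starRingEnd ℂ) (f t))
      (volume.restrict (Ioc a b)) :=
    (RCLike.continuous_conj (K := ℂ)).comp_aestronglyMeasurable
      (((hfcont.mono hIccsub).mono Ioc_subset_Icc_self).aestronglyMeasurable measurableSet_Ioc)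
  have hconjbd : ∀ᵐ t ∂(volume.restrict (Ioc a b)), ‖(starRingEnd ℂ) (f t)‖ ≤ C := by
    filter_upwards [ae_restrict_mem measurableSet_Ioc] with t ht
    rw [RCLike.norm_conj]
    exact hC t (Ioc_subset_Icc_self ht)
  have int1 : IntegrableOn (fun t => f'' t * (starRingEnd ℂ) (f t)) (Ioc a b) := by
    have := Integrable.bdd_mul ((h2 a ha b hb).1) hconjm hconjbd
    exact this.congr (Filter.Eventually.of_forall fun t => mul_comm _ _)
  have hid : ∀ t : ℝ, f' t * (starRingEnd ℂ) (f' t) = ((‖f' t‖ ^ 2 : ℝ) : ℂ) := by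
    intro t
    rw [Complex.mul_conj, Complex.normSq_eq_norm_sq]
  have hnormint : IntegrableOn (fun t => ‖f' t‖ ^ 2) (Ioc a b) := by
    have : ContinuousOn (fun t => ‖f' t‖ ^ 2) (Icc a b) :=
      ((hf'cont.mono hIccsub).norm.pow 2)
    exact (this.integrableOn_Icc).mono_set Ioc_subset_Icc_self
  have int2 : IntegrableOn (fun t => f' t * (starRingEnd ℂ) (f' t)) (Ioc a b) := by
    have : IntegrableOn (fun t => ((‖f' t‖ ^ 2 : ℝ) : ℂ)) (Ioc a b) := hnormint.ofReal
    exact this.congr (Filter.Eventually.of_forall fun t => (hid t).symm)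
  -- apply parts
  have hibp : (∫ t in Ioc a b, (f'' t * (starRingEnd ℂ) (f t) + f' t * (starRingEnd ℂ) (f' t)))
      = f' b * (starRingEnd ℂ) (f b) - f' a * (starRingEnd ℂ) (f a) := by
    refine parts hab ((h2 a ha b hb).1) (integrable_conj' ((h1 a ha b hb).1)) ?_ ?_
    · intro y hy
      have hyI : y ∈ Ioo (-1:ℝ) 1 := hIocsub hy
      have := h4 a ha y hyI
      rw [intervalIntegral.integral_of_le (by linarith [hy.1] : a ≤ y)] at this
      linear_combination this
    · intro y hy
      have hyI : y ∈ Ioo (-1:ℝ) 1 := hIocsub hy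
      have := h3 a ha y hyI
      have hconj := congrArg (starRingEnd ℂ) this
      rw [map_sub] at hconj
      rw [intervalIntegral.integral_of_le (by linarith [hy.1] : a ≤ y)] at hconj
      rw [← integral_conj] at hconj
      linear_combination hconj
  rw [integral_add int1 int2] at hibp
  have hre := congrArg Complex.re hibp
  rw [Complex.add_re, Complex.sub_re] at hre
  have hreal : (∫ t in Ioc a b, f' t * (starRingEnd ℂ) (f' t)).re
      = ∫ t in Ioc a b, ‖f' t‖ ^ 2 := by
    have h' := integral_re int2
    simp only [RCLike.re_to_complex] at h'
    rw [← h']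
    refine integral_congr_ae (Filter.Eventually.of_forall fun t => ?_)
    show (f' t * (starRingEnd ℂ) (f' t)).re = ‖f' t‖ ^ 2
    rw [hid t, Complex.ofReal_re]
  rw [hreal] at hre
  -- bound the f'' term
  have hbound : |(∫ t in Ioc a b, f'' t * (starRingEnd ℂ) (f t)).re| ≤ M := by
    refine (Complex.abs_re_le_norm _).trans ?_
    refine (MeasureTheory.norm_integral_le_integral_norm _).trans ?_
    have step1 : (∫ t in Ioc a b, ‖f'' t * (starRingEnd ℂ) (f t)‖) ≤ ∫ t in Ioc a b, D t := by
      refine setIntegral_mono_on int1.norm (hDint.mono_set hIocsub) measurableSet_Ioc ?_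
      intro t ht
      rw [norm_mul, RCLike.norm_conj]
      exact hdom t (hIocsub ht)
    refine step1.trans ?_
    refine setIntegral_mono_set hDint ?_ (HasSubset.Subset.eventuallyLE hIocsub)
    filter_upwards [ae_restrict_mem measurableSet_Ioo] with x hx
    have hv : (0:ℝ) < 1 - x ^ 2 := by nlinarith [hx.1, hx.2]
    have := inv_pos.mpr hv
    rw [hD]
    positivity
  have habs := abs_le.mp hbound
  linarith [hre, habs.1]

/-- The Dirichlet condition: every `f` in the maximal domain `Δ` has `f' ∈ L²(-1,1)`;
in particular `f` extends to an absolutely continuous function on `[-1,1]`. -/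
theorem dirichlet_condition (k : ℝ) (hk : 0 ≤ k) (f f' f'' : ℝ → ℂ)
    (hf : InJacobiMaxDomain k f f' f'') :
    IntegrableOn (fun x => ‖f' x‖ ^ 2) (Ioo (-1 : ℝ) 1) ∧
    ∃ g : ℝ → ℂ, ContinuousOn g (Icc (-1 : ℝ) 1) ∧ (∀ x ∈ Ioo (-1 : ℝ) 1, g x = f x) ∧
      IntervalIntegrable f' volume (-1) 1 ∧
      ∀ x ∈ Icc (-1 : ℝ) 1, ∀ y ∈ Icc (-1 : ℝ) 1, g y - g x = ∫ t in x..y, f' t := by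
  obtain ⟨h1, h2, h3, h4, h5, h6⟩ := hf
  have hf'cont : ContinuousOn f' (Ioo (-1:ℝ) 1) := cont_of_ftc h2 h4
  have hfderiv : ∀ x ∈ Ioo (-1:ℝ) 1, HasDerivAt f (f' x) x := deriv_of_ftc h1 h3 hf'cont
  have hfcont : ContinuousOn f (Ioo (-1:ℝ) 1) :=
    fun x hx => ((hfderiv x hx).continuousAt).continuousWithinAt
  obtain ⟨M, hstar⟩ := star_est hk h1 h2 h3 h4 h5 h6 hfcont hf'cont
  have h0I : (0:ℝ) ∈ Ioo (-1:ℝ) 1 := by constructor <;> norm_num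
  -- integrability of ‖f'‖² on compact subintervals
  have hgint : ∀ a ∈ Ioo (-1:ℝ) 1, ∀ b ∈ Ioo (-1:ℝ) 1,
      IntegrableOn (fun x => ‖f' x‖ ^ 2) (Ioc a b) := by
    intro a ha b hb
    have hsub : Icc a b ⊆ Ioo (-1:ℝ) 1 :=
      fun y hy => ⟨by linarith [ha.1, hy.1], by linarith [hb.2, hy.2]⟩
    exact (((hf'cont.mono hsub).norm.pow 2).integrableOn_Icc).mono_set Ioc_subset_Icc_self
  -- choice of sequences
  have hbseq : ∀ n : ℕ, ∃ b ∈ Ioo (max (1 - 1/(n+1:ℝ)) (1/2)) 1,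
      (f' b * (starRingEnd ℂ) (f b)).re ≤ 0 := by
    intro n
    refine claim_right hfderiv h5 _ ⟨?_, ?_⟩
    · have : (0:ℝ) < 1/2 := by norm_num
      exact lt_of_lt_of_le this (le_max_right _ _)
    · refine max_lt ?_ (by norm_num)
      have : (0:ℝ) < 1/(n+1:ℝ) := by positivity
      linarith
  have haseq : ∀ n : ℕ, ∃ a ∈ Ioo (-1:ℝ) (min (-1 + 1/(n+1:ℝ)) (-1/2)),
      0 ≤ (f' a * (starRingEnd ℂ) (f a)).re := by
    intro n
    refine claim_left hfderiv h5 _ ⟨?_, ?_⟩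
    · refine lt_min ?_ (by norm_num)
      have : (0:ℝ) < 1/(n+1:ℝ) := by positivity
      linarith
    · have : (-1/2 : ℝ) < 0 := by norm_num
      exact lt_of_le_of_lt (min_le_right _ _) this
  choose bs hbsmem hbsR using hbseq
  choose as hasmem hasR using haseq
  have hbs_lb : ∀ n : ℕ, (1:ℝ)/2 < bs n :=
    fun n => lt_of_le_of_lt (le_max_right _ _) (hbsmem n).1
  have hbs_ub : ∀ n : ℕ, bs n < 1 := fun n => (hbsmem n).2
  have has_ub : ∀ n : ℕ, as n < -1/2 :=
    fun n => lt_of_lt_of_le (hasmem n).2 (min_le_right _ _)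
  have has_lb : ∀ n : ℕ, -1 < as n := fun n => (hasmem n).1
  have hbsI : ∀ n, bs n ∈ Ioo (-1:ℝ) 1 :=
    fun n => ⟨by linarith [hbs_lb n], hbs_ub n⟩
  have hasI : ∀ n, as n ∈ Ioo (-1:ℝ) 1 :=
    fun n => ⟨has_lb n, by linarith [has_ub n]⟩
  -- limits
  have honen : Filter.Tendsto (fun n : ℕ => 1/(n+1:ℝ)) Filter.atTop (nhds 0) :=
    tendsto_one_div_add_atTop_nhds_zero_nat
  have hbs_tendsto : Filter.Tendsto bs Filter.atTop (nhds 1) := by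
    have hc : Filter.Tendsto (fun n : ℕ => max (1 - 1/(n+1:ℝ)) (1/2)) Filter.atTop
        (nhds 1) := by
      have h1' : Filter.Tendsto (fun n : ℕ => 1 - 1/(n+1:ℝ)) Filter.atTop (nhds 1) := by
        have := (tendsto_const_nhds (x := (1:ℝ)) (f := Filter.atTop (α := ℕ))).sub honen
        simpa using this
      have hmm := h1'.max (tendsto_const_nhds (x := (1/2:ℝ)) (f := Filter.atTop (α := ℕ)))
      have hmax : max (1:ℝ) (1/2) = 1 := by norm_num
      rw [hmax] at hmm
      exact hmm
    refine tendsto_of_tendsto_of_tendsto_of_le_of_le hc tendsto_const_nhds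
      (fun n => (hbsmem n).1.le) (fun n => (hbs_ub n).le)
  have has_tendsto : Filter.Tendsto as Filter.atTop (nhds (-1)) := by
    have hc : Filter.Tendsto (fun n : ℕ => min (-1 + 1/(n+1:ℝ)) (-1/2)) Filter.atTop
        (nhds (-1)) := by
      have h1' : Filter.Tendsto (fun n : ℕ => -1 + 1/(n+1:ℝ)) Filter.atTop (nhds (-1)) := by
        have := (tendsto_const_nhds (x := (-1:ℝ)) (f := Filter.atTop (α := ℕ))).add honen
        simpa using this
      have hmm := h1'.min (tendsto_const_nhds (x := (-1/2:ℝ)) (f := Filter.atTop (α := ℕ)))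
      have hmin : min (-1:ℝ) (-1/2) = -1 := by norm_num
      rw [hmin] at hmm
      exact hmm
    refine tendsto_of_tendsto_of_tendsto_of_le_of_le tendsto_const_nhds hc
      (fun n => (has_lb n).le) (fun n => (hasmem n).2.le)
  -- the uniform bound
  have hbound : ∀ n : ℕ, (∫ x in Ioc (as n) (bs n), ‖(fun x => ‖f' x‖ ^ 2) x‖) ≤ 2 * M := by
    intro n
    have hsplit : Ioc (as n) 0 ∪ Ioc 0 (bs n) = Ioc (as n) (bs n) :=
      Ioc_union_Ioc_eq_Ioc (by linarith [has_ub n]) (by linarith [hbs_lb n])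
    have heq : (∫ x in Ioc (as n) (bs n), ‖(fun x => ‖f' x‖ ^ 2) x‖)
        = ∫ x in Ioc (as n) (bs n), ‖f' x‖ ^ 2 := by
      refine setIntegral_congr_fun measurableSet_Ioc (fun x _ => ?_)
      rw [Real.norm_eq_abs, abs_of_nonneg (by positivity)]
    rw [heq, ← hsplit, setIntegral_union (Set.Ioc_disjoint_Ioc_of_le le_rfl) measurableSet_Ioc
      (hgint _ (hasI n) _ h0I) (hgint _ h0I _ (hbsI n))]
    have e1 := hstar (as n) (hasI n) 0 h0I (by linarith [has_ub n])
    have e2 := hstar 0 h0I (bs n) (hbsI n) (by linarith [hbs_lb n])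
    have e3 := hasR n
    have e4 := hbsR n
    linarith
  have hL2 : IntegrableOn (fun x => ‖f' x‖ ^ 2) (Ioo (-1:ℝ) 1) := by
    have := integrableOn_Ioc_of_intervalIntegral_norm_bounded
      (l := Filter.atTop) (f := fun x => ‖f' x‖ ^ 2) (a := as) (b := bs)
      (fun n => hgint _ (hasI n) _ (hbsI n)) has_tendsto hbs_tendsto
      (Filter.Eventually.of_forall hbound)
    exact this.mono_set Ioo_subset_Ioc_self
  refine ⟨hL2, ?_⟩
  -- f' is integrable on (-1,1)
  have hf'int : IntegrableOn f' (Ioo (-1:ℝ) 1) := by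
    have hconst : IntegrableOn (fun _ : ℝ => (1:ℝ)) (Ioo (-1:ℝ) 1) :=
      integrableOn_const measure_Ioo_lt_top.ne
    refine Integrable.mono' (hconst.add hL2)
      (hf'cont.aestronglyMeasurable measurableSet_Ioo)
      (Filter.Eventually.of_forall fun x => ?_)
    show ‖f' x‖ ≤ 1 + ‖f' x‖ ^ 2
    nlinarith [sq_nonneg (‖f' x‖ - 1), norm_nonneg (f' x)]
  have hII : IntervalIntegrable f' volume (-1) 1 := by
    rw [intervalIntegrable_iff_integrableOn_Ioo_of_le (by norm_num : (-1:ℝ) ≤ 1)]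
    exact hf'int
  have huIcc : uIcc (-1:ℝ) 1 = Icc (-1:ℝ) 1 := uIcc_of_le (by norm_num)
  have h0u : (0:ℝ) ∈ uIcc (-1:ℝ) 1 := by
    rw [huIcc]; constructor <;> norm_num
  refine ⟨fun x => f 0 + ∫ t in (0:ℝ)..x, f' t, ?_, ?_, hII, ?_⟩
  · have := continuousOn_primitive_interval' hII h0u
    rw [huIcc] at this
    exact continuousOn_const.add this
  · intro x hx
    have := h3 0 h0I x hx
    linear_combination -this
  · intro x hx y hy
    have hx' : x ∈ uIcc (-1:ℝ) 1 := by rw [huIcc]; exact hx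
    have hy' : y ∈ uIcc (-1:ℝ) 1 := by rw [huIcc]; exact hy
    have hiy : IntervalIntegrable f' volume 0 y :=
      hII.mono_set (uIcc_subset_uIcc h0u hy')
    have hix : IntervalIntegrable f' volume 0 x :=
      hII.mono_set (uIcc_subset_uIcc h0u hx')
    have := intervalIntegral.integral_interval_sub_left hiy hix
    linear_combination this
end

section
/- If f ∈ Δ, the maximal domain of the Jacobi expression ℓ[·] in L²((-1,1); (1-x²)^{-1}dx), then the limits lim_{x→1⁻} f(x) and lim_{x→-1⁺} f(x) exist and both equal 0. -/
open MeasureTheory Set Filter Topology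

lemma mem_Ioo_neg' {x : ℝ} (hx : x ∈ Ioo (-1:ℝ) 1) : -x ∈ Ioo (-1:ℝ) 1 :=
  ⟨by linarith [hx.2], by linarith [hx.1]⟩

/-- A function that is interval integrable on all subintervals of `(-1,1)` is
a.e. strongly measurable on `(-1,1)`. -/
lemma aesm_of_II {g : ℝ → ℂ}
    (h : ∀ x ∈ Ioo (-1:ℝ) 1, ∀ y ∈ Ioo (-1:ℝ) 1, IntervalIntegrable g volume x y) :
    AEStronglyMeasurable g (volume.restrict (Ioo (-1:ℝ) 1)) := by
  have hU : Ioo (-1:ℝ) 1 = ⋃ n : ℕ, Ioc (-(1 - 1/((n:ℝ)+2))) (1 - 1/((n:ℝ)+2)) := by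
    ext t
    simp only [mem_iUnion, mem_Ioo, mem_Ioc]
    constructor
    · rintro ⟨h1, h2⟩
      obtain ⟨n, hn⟩ := exists_nat_one_div_lt (show (0:ℝ) < min (1 - t) (1 + t) from
        lt_min (by linarith) (by linarith))
      have hmono : 1/((n:ℝ)+2) ≤ 1/((n:ℝ)+1) :=
        one_div_le_one_div_of_le (by positivity) (by linarith)
      have h1n : 1/((n:ℝ)+1) < 1 + t := lt_of_lt_of_le hn (min_le_right _ _)
      have h2n : 1/((n:ℝ)+1) < 1 - t := lt_of_lt_of_le hn (min_le_left _ _)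
      exact ⟨n, by linarith, by linarith⟩
    · rintro ⟨n, h1, h2⟩
      have hp : 0 < 1/((n:ℝ)+2) := by positivity
      have hq : 1/((n:ℝ)+2) ≤ 1 := by
        rw [div_le_one (by positivity)]; linarith
      constructor <;> linarith
  rw [hU, aestronglyMeasurable_iUnion_iff]
  intro n
  have hp : 0 < 1/((n:ℝ)+2) := by positivity
  have hq : 1/((n:ℝ)+2) ≤ 1 := by rw [div_le_one (by positivity)]; linarith
  have hmem : (1:ℝ) - 1/((n:ℝ)+2) ∈ Ioo (-1:ℝ) 1 := ⟨by linarith, by linarith⟩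
  have hII := h (-(1-1/((n:ℝ)+2))) (mem_Ioo_neg' hmem) (1-1/((n:ℝ)+2)) hmem
  exact ((intervalIntegrable_iff_integrableOn_Ioc_of_le (by linarith)).mp hII).aestronglyMeasurable

/-- A function given on `(-1,1)` as the primitive of a locally interval integrable
function is continuous on `(-1,1)`. -/
lemma contOn_of_ftc {F g : ℝ → ℂ}
    (hInt : ∀ x ∈ Ioo (-1:ℝ) 1, ∀ y ∈ Ioo (-1:ℝ) 1, IntervalIntegrable g volume x y)
    (hftc : ∀ x ∈ Ioo (-1:ℝ) 1, ∀ y ∈ Ioo (-1:ℝ) 1, F y - F x = ∫ t in x..y, g t) :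
    ContinuousOn F (Ioo (-1:ℝ) 1) := by
  refine continuousOn_of_forall_continuousAt fun t0 ht0 => ?_
  obtain ⟨h1, h2⟩ := ht0
  have ha : (t0-1)/2 ∈ Ioo (-1:ℝ) 1 := ⟨by linarith, by linarith⟩
  have hb : (t0+1)/2 ∈ Ioo (-1:ℝ) 1 := ⟨by linarith, by linarith⟩
  have hab : (t0-1)/2 ≤ (t0+1)/2 := by linarith
  have hcont : ContinuousOn (fun y => ∫ t in ((t0-1)/2)..y, g t) (uIcc ((t0-1)/2) ((t0+1)/2)) :=
    intervalIntegral.continuousOn_primitive_interval' (hInt _ ha _ hb) left_mem_uIcc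
  have hIcc : Icc ((t0-1)/2) ((t0+1)/2) ∈ 𝓝 t0 := Icc_mem_nhds (by linarith) (by linarith)
  have h1' : ContinuousAt (fun y => F ((t0-1)/2) + ∫ t in ((t0-1)/2)..y, g t) t0 := by
    refine continuousAt_const.add (ContinuousOn.continuousAt ?_ hIcc)
    rwa [uIcc_of_le hab] at hcont
  refine h1'.congr ?_
  filter_upwards [Ioo_mem_nhds h1 h2] with y hy
  have h := hftc _ ha y hy
  linear_combination -h

/-- Core lemma: the boundary value at `1` of a maximal domain function vanishes. -/
lemma tendsto_zero_at_one {f f' f'' : ℝ → ℂ}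
    (hI1 : ∀ x ∈ Ioo (-1:ℝ) 1, ∀ y ∈ Ioo (-1:ℝ) 1, IntervalIntegrable f' volume x y)
    (hI2 : ∀ x ∈ Ioo (-1:ℝ) 1, ∀ y ∈ Ioo (-1:ℝ) 1, IntervalIntegrable f'' volume x y)
    (hftc1 : ∀ x ∈ Ioo (-1:ℝ) 1, ∀ y ∈ Ioo (-1:ℝ) 1, f y - f x = ∫ t in x..y, f' t)
    (hftc2 : ∀ x ∈ Ioo (-1:ℝ) 1, ∀ y ∈ Ioo (-1:ℝ) 1, f' y - f' x = ∫ t in x..y, f'' t)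
    (hintf : IntegrableOn (fun x => ‖f x‖ ^ 2 * (1 - x ^ 2)⁻¹) (Ioo (-1:ℝ) 1))
    (hint2 : IntegrableOn (fun x => ‖f'' x‖ ^ 2 * (1 - x ^ 2)) (Ioo (-1:ℝ) 1)) :
    Tendsto f (𝓝[<] (1:ℝ)) (𝓝 0) := by
  have h0 : (0:ℝ) ∈ Ioo (-1:ℝ) 1 := by norm_num
  set M : ℝ := ∫ x in Ioo (-1:ℝ) 1, ‖f'' x‖ ^ 2 * (1 - x ^ 2) with hM
  -- key pointwise bound for `f'` near `1`
  have key : ∀ y ∈ Ioo (0:ℝ) 1,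
      ‖f' y‖ ≤ (‖f' 0‖ + M/2) + (1 - y) ^ (-(1:ℝ)/2) := by
    intro y hy
    obtain ⟨hy0, hy1⟩ := hy
    have hyI : y ∈ Ioo (-1:ℝ) 1 := ⟨by linarith, hy1⟩
    have hII : IntervalIntegrable f'' volume 0 y := hI2 0 h0 y hyI
    have hIocsub : Ioc (0:ℝ) y ⊆ Ioo (-1:ℝ) 1 :=
      fun t ht => ⟨by linarith [ht.1], lt_of_le_of_lt ht.2 hy1⟩
    have hA : IntervalIntegrable (fun t => ‖f'' t‖^2 * (1 - t^2)) volume 0 y :=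
      (intervalIntegrable_iff_integrableOn_Ioc_of_le hy0.le).mpr (hint2.mono_set hIocsub)
    have hB : IntervalIntegrable (fun t : ℝ => (1 - t^2)⁻¹) volume 0 y := by
      apply ContinuousOn.intervalIntegrable
      rw [uIcc_of_le hy0.le]
      exact ((continuous_const.sub (continuous_pow 2)).continuousOn).inv₀
        fun t ht => ne_of_gt (show (0:ℝ) < 1 - t^2 by nlinarith [ht.1, ht.2])
    have hC : IntervalIntegrable (fun t : ℝ => (1 - t)⁻¹) volume 0 y := by
      apply ContinuousOn.intervalIntegrable
      rw [uIcc_of_le hy0.le]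
      exact ((continuous_const.sub continuous_id).continuousOn).inv₀
        fun t ht => ne_of_gt (show (0:ℝ) < 1 - t by nlinarith [ht.1, ht.2])
    have step1 : ‖f' y - f' 0‖ ≤ ∫ t in (0:ℝ)..y, ‖f'' t‖ := by
      rw [hftc2 0 h0 y hyI]
      exact intervalIntegral.norm_integral_le_integral_norm hy0.le
    have step2 : (∫ t in (0:ℝ)..y, ‖f'' t‖)
        ≤ ∫ t in (0:ℝ)..y, (1/2 * (‖f'' t‖^2 * (1 - t^2)) + 1/2 * (1 - t^2)⁻¹) := by
      apply intervalIntegral.integral_mono_on hy0.le hII.norm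
        ((hA.const_mul _).add (hB.const_mul _))
      intro t ht
      have hw : 0 < 1 - t^2 := by nlinarith [ht.1, ht.2]
      have h1 := sq_nonneg (‖f'' t‖ * (1 - t^2) - 1)
      have h2 : (1 - t^2) * (1 - t^2)⁻¹ = 1 := mul_inv_cancel₀ hw.ne'
      nlinarith [norm_nonneg (f'' t), hw, mul_pos hw (inv_pos.mpr hw),
        inv_pos.mpr hw]
    have hdecomp : (∫ t in (0:ℝ)..y, (1/2 * (‖f'' t‖^2 * (1 - t^2)) + 1/2 * (1 - t^2)⁻¹))
        = 1/2 * (∫ t in (0:ℝ)..y, ‖f'' t‖^2 * (1 - t^2))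
          + 1/2 * ∫ t in (0:ℝ)..y, (1 - t^2)⁻¹ := by
      rw [intervalIntegral.integral_add (hA.const_mul _) (hB.const_mul _),
        intervalIntegral.integral_const_mul, intervalIntegral.integral_const_mul]
    have step3 : (∫ t in (0:ℝ)..y, ‖f'' t‖^2 * (1 - t^2)) ≤ M := by
      rw [intervalIntegral.integral_of_le hy0.le, hM]
      apply setIntegral_mono_set hint2 ?_ hIocsub.eventuallyLE
      filter_upwards [ae_restrict_mem measurableSet_Ioo] with t ht
      have hw : 0 < 1 - t^2 := by nlinarith [ht.1, ht.2]
      exact mul_nonneg (pow_nonneg (norm_nonneg _) 2) hw.le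
    have step4 : (∫ t in (0:ℝ)..y, (1 - t^2)⁻¹) ≤ ∫ t in (0:ℝ)..y, (1 - t)⁻¹ := by
      apply intervalIntegral.integral_mono_on hy0.le hB hC
      intro t ht
      have hu : 0 < 1 - t := by linarith [ht.2]
      have h2 : 1 - t ≤ 1 - t^2 := by nlinarith [ht.1, ht.2]
      exact inv_anti₀ hu h2
    have step5 : (∫ t in (0:ℝ)..y, (1 - t)⁻¹) = -Real.log (1 - y) := by
      have hderiv : ∀ t ∈ uIcc (0:ℝ) y,
          HasDerivAt (fun u => -Real.log (1 - u)) (1 - t)⁻¹ t := by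
        intro t ht
        rw [uIcc_of_le hy0.le] at ht
        have h1 : (1:ℝ) - t ≠ 0 := by nlinarith [ht.1, ht.2]
        have hd : HasDerivAt (fun u : ℝ => 1 - u) (-1) t := (hasDerivAt_id t).const_sub 1
        have := ((Real.hasDerivAt_log h1).comp t hd).neg
        exact this.congr_deriv (by ring)
      rw [intervalIntegral.integral_eq_sub_of_hasDerivAt hderiv hC]
      norm_num
    have hu : 0 < 1 - y := by linarith
    have step6 : -Real.log (1 - y) ≤ 2 * (1 - y) ^ (-(1:ℝ)/2) := by
      have hs : 0 < (1 - y) ^ (-(1:ℝ)/2) := Real.rpow_pos_of_pos hu _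
      have hl : Real.log ((1 - y) ^ (-(1:ℝ)/2)) ≤ (1 - y) ^ (-(1:ℝ)/2) - 1 :=
        Real.log_le_sub_one_of_pos hs
      rw [Real.log_rpow hu] at hl
      linarith
    have htri : ‖f' y‖ ≤ ‖f' 0‖ + ‖f' y - f' 0‖ := by
      have := norm_add_le (f' 0) (f' y - f' 0)
      simpa using this
    linarith [step1, step2, hdecomp, step3, step4, step5, step6]
  -- integrability of the dominating function
  have hrpow : IntegrableOn (fun y : ℝ => (1 - y) ^ (-(1:ℝ)/2)) (Ioo (0:ℝ) 1) := by
    have h1 : IntervalIntegrable (fun x : ℝ => x ^ (-(1:ℝ)/2)) volume 0 1 :=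
      intervalIntegral.intervalIntegrable_rpow' (by norm_num)
    have h2 := (h1.comp_sub_left 1).symm
    rw [show (1:ℝ) - 0 = 1 by norm_num, show (1:ℝ) - 1 = 0 by norm_num] at h2
    exact (intervalIntegrable_iff_integrableOn_Ioo_of_le (by norm_num : (0:ℝ) ≤ 1)).mp h2
  have hf'cont : ContinuousOn f' (Ioo (-1:ℝ) 1) := contOn_of_ftc hI2 hftc2
  have hf'int : IntegrableOn f' (Ioo (0:ℝ) 1) := by
    have hconst : IntegrableOn (fun _ : ℝ => (‖f' 0‖ + M/2)) (Ioo (0:ℝ) 1) :=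
      integrableOn_const measure_Ioo_lt_top.ne
    refine Integrable.mono' (hconst.add hrpow) ?_ ?_
    · exact (hf'cont.mono (fun t ht => ⟨by linarith [ht.1], ht.2⟩)).aestronglyMeasurable
        measurableSet_Ioo
    · filter_upwards [ae_restrict_mem measurableSet_Ioo] with y hy
      exact key y hy
  have hf'Icc : IntegrableOn f' (Icc (0:ℝ) 1) := by
    rw [integrableOn_Icc_iff_integrableOn_Ioc, integrableOn_Ioc_iff_integrableOn_Ioo]
    exact hf'int
  set F : ℝ → ℂ := fun x => ∫ t in Ioc (0:ℝ) x, f' t with hF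
  have hFcont : ContinuousOn F (Icc (0:ℝ) 1) := intervalIntegral.continuousOn_primitive hf'Icc
  have hfeq : ∀ y ∈ Ioo (0:ℝ) 1, f y = f 0 + F y := by
    intro y hy
    have hyI : y ∈ Ioo (-1:ℝ) 1 := ⟨by linarith [hy.1], hy.2⟩
    have h := hftc1 0 h0 y hyI
    rw [intervalIntegral.integral_of_le hy.1.le] at h
    rw [hF]
    linear_combination h
  have hzero1 : Tendsto f (𝓝[<] (1:ℝ)) (𝓝 (f 0 + F 1)) := by
    rw [← nhdsWithin_Ioo_eq_nhdsLT (by norm_num : (0:ℝ) < 1)]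
    have hFt : Tendsto F (𝓝[Ioo (0:ℝ) 1] 1) (𝓝 (F 1)) :=
      (hFcont 1 (right_mem_Icc.mpr zero_le_one)).mono_left
        (nhdsWithin_mono 1 Ioo_subset_Icc_self)
    have ht : Tendsto (fun y => f 0 + F y) (𝓝[Ioo (0:ℝ) 1] 1) (𝓝 (f 0 + F 1)) :=
      tendsto_const_nhds.add hFt
    apply Tendsto.congr' _ ht
    filter_upwards [eventually_mem_nhdsWithin] with y hy
    exact (hfeq y hy).symm
  suffices hL : f 0 + F 1 = 0 by rwa [hL] at hzero1
  by_contra hL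
  have hpos : 0 < ‖f 0 + F 1‖ := norm_pos_iff.mpr hL
  have hev : ∀ᶠ y in 𝓝[<] (1:ℝ), ‖f 0 + F 1‖/2 ≤ ‖f y‖ := by
    have hnorm : Tendsto (fun y => ‖f y‖) (𝓝[<] (1:ℝ)) (𝓝 ‖f 0 + F 1‖) := hzero1.norm
    exact hnorm.eventually (eventually_ge_nhds (by linarith))
  obtain ⟨b, hb1, hb⟩ := mem_nhdsLT_iff_exists_Ioo_subset.mp hev
  have hb'1 : max b 0 < 1 := max_lt hb1 one_pos
  have hsub : Ioo (max b 0) 1 ⊆ Ioo (-1:ℝ) 1 := fun t ht =>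
    ⟨lt_of_lt_of_le (by norm_num) (le_trans (le_max_right b 0) ht.1.le), ht.2⟩
  have hint' : IntegrableOn (fun y => ‖f y‖^2 * (1 - y^2)⁻¹) (Ioo (max b 0) 1) :=
    hintf.mono_set hsub
  have hc2 : (0:ℝ) < ‖f 0 + F 1‖^2 := by positivity
  have hinv : IntegrableOn (fun y : ℝ => (1 - y)⁻¹) (Ioo (max b 0) 1) := by
    refine Integrable.mono' (hint'.const_mul (8/‖f 0 + F 1‖^2)) ?_ ?_
    · refine Measurable.aestronglyMeasurable (Measurable.inv ?_)
      exact measurable_const.sub measurable_id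
    · filter_upwards [ae_restrict_mem measurableSet_Ioo] with y hy
      have hy1 : y < 1 := hy.2
      have hy0 : 0 ≤ y := le_trans (le_max_right b 0) hy.1.le
      have hfy : ‖f 0 + F 1‖/2 ≤ ‖f y‖ := hb ⟨lt_of_le_of_lt (le_max_left b 0) hy.1, hy.2⟩
      have hu : 0 < 1 - y := by linarith
      have hv : 0 < 1 + y := by linarith
      have hv2 : 1 + y ≤ 2 := by linarith
      have h2 : (‖f 0 + F 1‖/2)^2 ≤ ‖f y‖^2 := by
        apply pow_le_pow_left₀ (by positivity) hfy
      have hB2 : (2:ℝ)⁻¹ ≤ (1+y)⁻¹ := inv_anti₀ hv hv2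
      rw [Real.norm_eq_abs, abs_of_pos (inv_pos.mpr hu)]
      have e1 : ((1:ℝ) - y^2)⁻¹ = (1-y)⁻¹ * (1+y)⁻¹ := by
        rw [show (1:ℝ) - y^2 = (1-y)*(1+y) by ring, mul_inv]
      rw [e1]
      have hcc : 8/‖f 0 + F 1‖^2 * (‖f 0 + F 1‖/2)^2 = 2 := by
        rw [div_pow, div_mul_div_comm,
          div_eq_iff (mul_pos hc2 (by norm_num : (0:ℝ) < 2^2)).ne']
        ring
      calc (1-y)⁻¹ = 8/‖f 0 + F 1‖^2 * ((‖f 0 + F 1‖/2)^2 * ((1-y)⁻¹ * 2⁻¹)) := by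
            rw [show 8/‖f 0 + F 1‖^2 * ((‖f 0 + F 1‖/2)^2 * ((1-y)⁻¹ * 2⁻¹))
                = (8/‖f 0 + F 1‖^2 * (‖f 0 + F 1‖/2)^2) * ((1-y)⁻¹ * 2⁻¹) by ring, hcc]
            ring
        _ ≤ 8/‖f 0 + F 1‖^2 * (‖f y‖^2 * ((1-y)⁻¹ * (1+y)⁻¹)) := by
            gcongr
  have hIIinv : IntervalIntegrable (fun y : ℝ => (1 - y)⁻¹) volume (max b 0) 1 :=
    (intervalIntegrable_iff_integrableOn_Ioo_of_le hb'1.le).mpr hinv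
  have h3 : IntervalIntegrable (fun y : ℝ => (y - 1)⁻¹) volume (max b 0) 1 := by
    have heq : (fun y : ℝ => (y - 1)⁻¹) = fun y : ℝ => -(1 - y)⁻¹ := by
      funext y
      rw [show y - 1 = -(1 - y) by ring, inv_neg]
    rw [heq]
    exact hIIinv.neg
  rw [intervalIntegrable_sub_inv_iff] at h3
  rcases h3 with h | h
  · exact hb'1.ne h
  · exact h right_mem_uIcc

/-- Every `f` in the maximal domain `Δ` of the Jacobi expression satisfies
`lim_{x→1⁻} f(x) = 0` and `lim_{x→-1⁺} f(x) = 0`. -/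
theorem maxDomain_boundary_values_zero (k : ℝ) (hk : 0 ≤ k) (f f' f'' : ℝ → ℂ)
    (hf : InJacobiMaxDomain k f f' f'') :
    Tendsto f (𝓝[<] (1 : ℝ)) (𝓝 0) ∧ Tendsto f (𝓝[>] (-1 : ℝ)) (𝓝 0) := by
  obtain ⟨hI1, hI2, hftc1, hftc2, hintf, hintl⟩ := hf
  have hf''m : AEStronglyMeasurable f'' (volume.restrict (Ioo (-1:ℝ) 1)) := aesm_of_II hI2
  have hfm : AEStronglyMeasurable f (volume.restrict (Ioo (-1:ℝ) 1)) :=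
    (contOn_of_ftc hI1 hftc1).aestronglyMeasurable measurableSet_Ioo
  -- `(1-x²)|f''|²` is integrable on `(-1,1)`
  have hint2 : IntegrableOn (fun x => ‖f'' x‖ ^ 2 * (1 - x ^ 2)) (Ioo (-1:ℝ) 1) := by
    have hg : IntegrableOn
        (fun x => 2 * (‖-((1 - x ^ 2 : ℝ) : ℂ) * f'' x + (k : ℂ) * f x‖ ^ 2 * (1 - x ^ 2)⁻¹)
          + 2 * k ^ 2 * (‖f x‖ ^ 2 * (1 - x ^ 2)⁻¹)) (Ioo (-1:ℝ) 1) :=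
      (hintl.const_mul 2).add (hintf.const_mul (2 * k ^ 2))
    refine Integrable.mono' hg ?_ ?_
    · exact ((hf''m.norm.pow 2).mul
        ((continuous_const.sub (continuous_pow 2)).aestronglyMeasurable))
    · filter_upwards [ae_restrict_mem measurableSet_Ioo] with x hx
      have hw : 0 < 1 - x ^ 2 := by nlinarith [hx.1, hx.2]
      set A : ℂ := -((1 - x ^ 2 : ℝ) : ℂ) * f'' x + (k : ℂ) * f x with hA
      have hrepr : ((1 - x ^ 2 : ℝ) : ℂ) * f'' x = (k : ℂ) * f x - A := by
        rw [hA]; ring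
      have hb : (1 - x ^ 2) * ‖f'' x‖ ≤ ‖A‖ + k * ‖f x‖ := by
        have h1 : ‖((1 - x ^ 2 : ℝ) : ℂ) * f'' x‖ ≤ ‖(k : ℂ) * f x‖ + ‖A‖ :=
          hrepr ▸ norm_sub_le _ _
        rw [norm_mul, Complex.norm_real, Real.norm_eq_abs, abs_of_pos hw, norm_mul,
          Complex.norm_real, Real.norm_eq_abs, abs_of_nonneg hk] at h1
        linarith
      have hsq : ((1 - x ^ 2) * ‖f'' x‖) ^ 2 ≤ 2 * ‖A‖ ^ 2 + 2 * k ^ 2 * ‖f x‖ ^ 2 := by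
        nlinarith [mul_self_le_mul_self (mul_nonneg hw.le (norm_nonneg (f'' x))) hb,
          sq_nonneg (‖A‖ - k * ‖f x‖), norm_nonneg A, norm_nonneg (f x)]
      rw [Real.norm_eq_abs, abs_of_nonneg (mul_nonneg (by positivity) hw.le)]
      calc ‖f'' x‖ ^ 2 * (1 - x ^ 2)
          = ((1 - x ^ 2) * ‖f'' x‖) ^ 2 * (1 - x ^ 2)⁻¹ := by
            field_simp
        _ ≤ (2 * ‖A‖ ^ 2 + 2 * k ^ 2 * ‖f x‖ ^ 2) * (1 - x ^ 2)⁻¹ := by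
            apply mul_le_mul_of_nonneg_right hsq (inv_pos.mpr hw).le
        _ = 2 * (‖A‖ ^ 2 * (1 - x ^ 2)⁻¹) + 2 * k ^ 2 * (‖f x‖ ^ 2 * (1 - x ^ 2)⁻¹) := by
            ring
  refine ⟨tendsto_zero_at_one hI1 hI2 hftc1 hftc2 hintf hint2, ?_⟩
  -- reflection: apply the core lemma to `x ↦ f (-x)`
  have hnegmem : ∀ x ∈ Ioo (-1:ℝ) 1, -x ∈ Ioo (-1:ℝ) 1 := fun x hx => mem_Ioo_neg' hx
  have hI1g : ∀ x ∈ Ioo (-1:ℝ) 1, ∀ y ∈ Ioo (-1:ℝ) 1,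
      IntervalIntegrable (fun t => -f' (-t)) volume x y := by
    intro x hx y hy
    have h := (IntervalIntegrable.iff_comp_neg (by simp)).mp (hI1 (-x) (hnegmem x hx) (-y) (hnegmem y hy))
    rw [neg_neg, neg_neg] at h
    exact h.neg
  have hI2g : ∀ x ∈ Ioo (-1:ℝ) 1, ∀ y ∈ Ioo (-1:ℝ) 1,
      IntervalIntegrable (fun t => f'' (-t)) volume x y := by
    intro x hx y hy
    have h := (IntervalIntegrable.iff_comp_neg (by simp)).mp (hI2 (-x) (hnegmem x hx) (-y) (hnegmem y hy))
    rwa [neg_neg, neg_neg] at h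
  have hftc1g : ∀ x ∈ Ioo (-1:ℝ) 1, ∀ y ∈ Ioo (-1:ℝ) 1,
      f (-y) - f (-x) = ∫ t in x..y, -f' (-t) := by
    intro x hx y hy
    have h := hftc1 (-x) (hnegmem x hx) (-y) (hnegmem y hy)
    rw [intervalIntegral.integral_neg, intervalIntegral.integral_comp_neg,
      ← intervalIntegral.integral_symm]
    exact h
  have hftc2g : ∀ x ∈ Ioo (-1:ℝ) 1, ∀ y ∈ Ioo (-1:ℝ) 1,
      -f' (-y) - -f' (-x) = ∫ t in x..y, f'' (-t) := by
    intro x hx y hy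
    have h := hftc2 (-x) (hnegmem x hx) (-y) (hnegmem y hy)
    rw [intervalIntegral.integral_comp_neg, intervalIntegral.integral_symm, ← h]
    ring
  have hrefl : ∀ H : ℝ → ℝ, IntegrableOn H (Ioo (-1:ℝ) 1) →
      IntegrableOn (fun x => H (-x)) (Ioo (-1:ℝ) 1) := by
    intro H hH
    have h1 : IntervalIntegrable H volume (-1) 1 :=
      (intervalIntegrable_iff_integrableOn_Ioo_of_le (by norm_num)).mpr hH
    have h2 := (IntervalIntegrable.iff_comp_neg (by simp)).mp h1
    rw [show -(-1:ℝ) = 1 by norm_num] at h2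
    exact (intervalIntegrable_iff_integrableOn_Ioo_of_le (by norm_num : (-1:ℝ) ≤ 1)).mp h2.symm
  have hintfg : IntegrableOn (fun x => ‖f (-x)‖ ^ 2 * (1 - x ^ 2)⁻¹) (Ioo (-1:ℝ) 1) := by
    have h := hrefl (fun x => ‖f x‖ ^ 2 * (1 - x ^ 2)⁻¹) hintf
    simpa [neg_sq] using h
  have hint2g : IntegrableOn (fun x => ‖f'' (-x)‖ ^ 2 * (1 - x ^ 2)) (Ioo (-1:ℝ) 1) := by
    have h := hrefl (fun x => ‖f'' x‖ ^ 2 * (1 - x ^ 2)) hint2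
    simpa [neg_sq] using h
  have h1g := tendsto_zero_at_one (f := fun x => f (-x)) (f' := fun x => -f' (-x))
    (f'' := fun x => f'' (-x)) hI1g hI2g hftc1g hftc2g hintfg hint2g
  have hneg : Tendsto (fun x : ℝ => -x) (𝓝[>] (-1:ℝ)) (𝓝[<] (1:ℝ)) := by
    apply tendsto_nhdsWithin_of_tendsto_nhds_of_eventually_within
    · simpa using (continuous_neg.tendsto (-1:ℝ)).mono_left nhdsWithin_le_nhds
    · filter_upwards [eventually_mem_nhdsWithin] with x hx
      simp only [mem_Iio]
      simp only [mem_Ioi] at hx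
      linarith
  have := h1g.comp hneg
  simpa only [Function.comp_def, neg_neg] using this
end
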